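/- arXiv:2310.02137 — 5 statements merged into one kernel-verified Lean document; each statement's English description precedes it below -/
import Mathlib

section
/- For every real number x ≥ 2, the sum of τ(v)² over 1 ≤ v ≤ x is O(x (log x)³), where τ is the divisor function. -/
open Finset

private lemma lcm_card_bound (N a b : ℕ) :
    ((Icc 1 N).filter (fun v => a ∣ v ∧ b ∣ v)).card = N / Nat.lcm a b := by
  have h1 : Icc 1 N = Ioc 0 N := rfl
  rw [h1, ← Nat.Ioc_filter_dvd_card_eq_div N (Nat.lcm a b)]
  congr 1
  apply Finset.filter_congr
  intro v _
  simp [Nat.lcm_dvd_iff]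

private lemma lcm_eq (a b : ℕ) (ha : 0 < a) :
    Nat.lcm a b = Nat.gcd a b * (a / Nat.gcd a b) * (b / Nat.gcd a b) := by
  have hg : 0 < Nat.gcd a b := Nat.gcd_pos_of_pos_left b ha
  apply Nat.eq_of_mul_eq_mul_left hg
  rw [Nat.gcd_mul_lcm]
  have h1 : Nat.gcd a b * (a / Nat.gcd a b) = a := Nat.mul_div_cancel' (Nat.gcd_dvd_left a b)
  have h2 : Nat.gcd a b * (b / Nat.gcd a b) = b := Nat.mul_div_cancel' (Nat.gcd_dvd_right a b)
  have : Nat.gcd a b * (Nat.gcd a b * (a / Nat.gcd a b) * (b / Nat.gcd a b))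
      = (Nat.gcd a b * (a / Nat.gcd a b)) * (Nat.gcd a b * (b / Nat.gcd a b)) := by ring
  rw [this, h1, h2]

/-- Key combinatorial bound: sum of `1/lcm(a,b)` over a box is at most `H³`. -/
private lemma sum_inv_lcm_le (N : ℕ) :
    ∑ a ∈ Icc 1 N, ∑ b ∈ Icc 1 N, (1:ℝ)/(Nat.lcm a b)
      ≤ (∑ k ∈ Icc 1 N, (1:ℝ)/k)^3 := by
  set I := Icc 1 N with hIdef
  have h1 : ∑ a ∈ I, ∑ b ∈ I, (1:ℝ)/(Nat.lcm a b)
      = ∑ p ∈ I ×ˢ I, (1:ℝ)/(Nat.lcm p.1 p.2) := by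
    rw [Finset.sum_product]
  set e : ℕ × ℕ → ℕ × ℕ × ℕ :=
    fun p => (Nat.gcd p.1 p.2, p.1 / Nat.gcd p.1 p.2, p.2 / Nat.gcd p.1 p.2) with he
  set g : ℕ × ℕ × ℕ → ℝ := fun q => (1:ℝ)/(q.1 * q.2.1 * q.2.2 : ℕ) with hg
  have h2 : ∑ p ∈ I ×ˢ I, (1:ℝ)/(Nat.lcm p.1 p.2) = ∑ p ∈ I ×ˢ I, g (e p) := by
    refine Finset.sum_congr rfl fun p hp => ?_
    rw [Finset.mem_product, hIdef, mem_Icc, mem_Icc] at hp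
    rw [hg, he]
    simp only
    rw [← lcm_eq p.1 p.2 (by omega)]
  have hinj : ∀ p ∈ I ×ˢ I, ∀ p' ∈ I ×ˢ I, e p = e p' → p = p' := by
    intro p hp p' hp' hee
    rw [he] at hee
    simp only [Prod.mk.injEq] at hee
    obtain ⟨hgcd, hda, hdb⟩ := hee
    have k1 : p.1 = p'.1 := by
      have e1 : Nat.gcd p.1 p.2 * (p.1 / Nat.gcd p.1 p.2) = p.1 :=
        Nat.mul_div_cancel' (Nat.gcd_dvd_left _ _)
      have e2 : Nat.gcd p'.1 p'.2 * (p'.1 / Nat.gcd p'.1 p'.2) = p'.1 :=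
        Nat.mul_div_cancel' (Nat.gcd_dvd_left _ _)
      rw [← e1, ← e2, hda, hgcd]
    have k2 : p.2 = p'.2 := by
      have e1 : Nat.gcd p.1 p.2 * (p.2 / Nat.gcd p.1 p.2) = p.2 :=
        Nat.mul_div_cancel' (Nat.gcd_dvd_right _ _)
      have e2 : Nat.gcd p'.1 p'.2 * (p'.2 / Nat.gcd p'.1 p'.2) = p'.2 :=
        Nat.mul_div_cancel' (Nat.gcd_dvd_right _ _)
      rw [← e1, ← e2, hdb, hgcd]
    exact Prod.ext k1 k2
  have h3 : ∑ p ∈ I ×ˢ I, g (e p) = ∑ q ∈ (I ×ˢ I).image e, g q :=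
    (Finset.sum_image hinj).symm
  have hsub : (I ×ˢ I).image e ⊆ I ×ˢ (I ×ˢ I) := by
    intro q hq
    rw [Finset.mem_image] at hq
    obtain ⟨p, hp, rfl⟩ := hq
    rw [Finset.mem_product, hIdef, mem_Icc, mem_Icc] at hp
    obtain ⟨⟨ha1, haN⟩, ⟨hb1, hbN⟩⟩ := hp
    have hgpos : 0 < Nat.gcd p.1 p.2 := Nat.gcd_pos_of_pos_left _ (by omega)
    have hgle : Nat.gcd p.1 p.2 ≤ p.1 := Nat.le_of_dvd (by omega) (Nat.gcd_dvd_left _ _)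
    have hd1 : 0 < p.1 / Nat.gcd p.1 p.2 := Nat.div_pos hgle hgpos
    have hd2 : 0 < p.2 / Nat.gcd p.1 p.2 :=
      Nat.div_pos (Nat.le_of_dvd (by omega) (Nat.gcd_dvd_right _ _)) hgpos
    simp only [Finset.mem_product, hIdef, mem_Icc, he]
    refine ⟨⟨hgpos, le_trans hgle haN⟩, ⟨hd1, le_trans (Nat.div_le_self _ _) haN⟩,
      ⟨hd2, le_trans (Nat.div_le_self _ _) hbN⟩⟩
  have h4 : ∑ q ∈ (I ×ˢ I).image e, g q ≤ ∑ q ∈ I ×ˢ (I ×ˢ I), g q := by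
    apply Finset.sum_le_sum_of_subset_of_nonneg hsub
    intro q _ _
    positivity
  have h5 : ∑ q ∈ I ×ˢ (I ×ˢ I), g q = (∑ k ∈ I, (1:ℝ)/k)^3 := by
    rw [Finset.sum_product]
    simp only [hg, Finset.sum_product]
    have : ∀ a b c : ℕ, (1:ℝ)/((a * b * c : ℕ)) = (1/a) * (1/b) * (1/c) := by
      intro a b c; push_cast; rw [one_div_mul_one_div, one_div_mul_one_div]
    simp only [this]
    rw [pow_succ, sq, Finset.sum_mul_sum, Finset.sum_mul]
    refine Finset.sum_congr rfl fun a _ => ?_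
    rw [Finset.sum_mul]
    refine Finset.sum_congr rfl fun b _ => ?_
    rw [Finset.mul_sum]
  rw [h1, h2, h3]
  exact h4.trans (le_of_eq h5)

/-- The sum of `τ(v)²` over `1 ≤ v ≤ x` is `O(x (log x)³)`,
with an absolute implied constant. -/
theorem sum_divisor_count_sq_le : ∃ C : ℝ, 0 < C ∧ ∀ x : ℝ, 2 ≤ x →
    ∑ v ∈ Finset.Icc 1 ⌊x⌋₊, ((v.divisors.card : ℝ)) ^ 2 ≤ C * x * (Real.log x) ^ 3 := by
  refine ⟨27, by norm_num, fun x hx => ?_⟩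
  set N := ⌊x⌋₊ with hNdef
  have hx1 : (1:ℝ) ≤ x := by linarith
  have hx0 : (0:ℝ) ≤ x := by linarith
  have hNx : (N:ℝ) ≤ x := Nat.floor_le hx0
  set I := Icc 1 N with hIdef
  set H : ℝ := ∑ k ∈ I, (1:ℝ)/k with hHdef
  -- Step 1: rewrite τ(v)² as a double sum of indicators over I
  have key : ∀ v ∈ I, ((v.divisors.card : ℝ))^2
      = ∑ a ∈ I, ∑ b ∈ I, if a ∣ v ∧ b ∣ v then (1:ℝ) else 0 := by
    intro v hv
    rw [hIdef, mem_Icc] at hv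
    have hv0 : v ≠ 0 := by omega
    have hdiv : v.divisors = I.filter (· ∣ v) := by
      ext a
      simp only [Nat.mem_divisors, hIdef, mem_filter, mem_Icc]
      constructor
      · rintro ⟨hav, -⟩
        have ha0 : 0 < a := Nat.pos_of_dvd_of_pos hav (by omega)
        have := Nat.le_of_dvd (by omega) hav
        exact ⟨⟨by omega, by omega⟩, hav⟩
      · rintro ⟨-, hav⟩
        exact ⟨hav, hv0⟩
    have hcard : ((v.divisors.card : ℝ)) = ∑ a ∈ I, if a ∣ v then (1:ℝ) else 0 := by
      rw [hdiv, Finset.sum_boole]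
    rw [hcard, sq, Finset.sum_mul_sum]
    refine Finset.sum_congr rfl fun a _ => Finset.sum_congr rfl fun b _ => ?_
    by_cases h1 : a ∣ v <;> by_cases h2 : b ∣ v <;> simp [h1, h2]
  rw [Finset.sum_congr rfl key, Finset.sum_comm]
  have hswap : ∀ a : ℕ, (∑ v ∈ I, ∑ b ∈ I, if a ∣ v ∧ b ∣ v then (1:ℝ) else 0)
      = ∑ b ∈ I, ∑ v ∈ I, (if a ∣ v ∧ b ∣ v then (1:ℝ) else 0) := fun a => Finset.sum_comm
  rw [Finset.sum_congr rfl fun a _ => hswap a]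
  -- Step 2: count multiples
  have step2 : ∀ a ∈ I, ∀ b ∈ I,
      ∑ v ∈ I, (if a ∣ v ∧ b ∣ v then (1:ℝ) else 0) ≤ x * (1/(Nat.lcm a b)) := by
    intro a ha b hb
    rw [Finset.sum_boole]
    rw [hIdef, lcm_card_bound N a b]
    rw [hIdef, mem_Icc] at ha hb
    have hlpos : 0 < Nat.lcm a b := Nat.lcm_pos (by omega) (by omega)
    calc ((N / Nat.lcm a b : ℕ) : ℝ) ≤ (N : ℝ) / (Nat.lcm a b : ℝ) := Nat.cast_div_le
      _ ≤ x / (Nat.lcm a b : ℝ) := by gcongr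
      _ = x * (1/(Nat.lcm a b)) := by ring
  have hH0 : 0 ≤ H := by
    rw [hHdef]; exact Finset.sum_nonneg fun k _ => by positivity
  have hHeq : H = (harmonic N : ℝ) := by
    rw [hHdef, hIdef]
    push_cast [harmonic_eq_sum_Icc]
    refine Finset.sum_congr rfl fun i _ => one_div _
  have hHle : H ≤ 3 * Real.log x := by
    have h1 : (harmonic N : ℝ) ≤ 1 + Real.log x := by
      rw [hNdef]
      exact harmonic_floor_le_one_add_log x hx1
    have hl2 : Real.log 2 ≤ Real.log x := Real.log_le_log (by norm_num) hx
    have := Real.log_two_gt_d9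
    rw [hHeq]
    linarith
  have hlog0 : 0 ≤ Real.log x := Real.log_nonneg hx1
  calc ∑ a ∈ I, ∑ b ∈ I, ∑ v ∈ I, (if a ∣ v ∧ b ∣ v then (1:ℝ) else 0)
      ≤ ∑ a ∈ I, ∑ b ∈ I, x * (1/(Nat.lcm a b)) :=
        Finset.sum_le_sum fun a ha => Finset.sum_le_sum fun b hb => step2 a ha b hb
    _ = x * ∑ a ∈ I, ∑ b ∈ I, (1:ℝ)/(Nat.lcm a b) := by
        rw [Finset.mul_sum]
        exact Finset.sum_congr rfl fun a _ => (Finset.mul_sum _ _ _).symm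
    _ ≤ x * H^3 := by
        rw [hHdef, hIdef]
        exact mul_le_mul_of_nonneg_left (sum_inv_lcm_le N) hx0
    _ ≤ x * (3 * Real.log x)^3 := by
        apply mul_le_mul_of_nonneg_left _ hx0
        exact pow_le_pow_left₀ hH0 hHle 3
    _ = 27 * x * (Real.log x)^3 := by ring
end

section
/- Let d ≥ 2 and n ≥ 2. For every prime power p^r, the average of σ'(a; p^r) over a ∈ 𝔉 := {a ∈ (ℤ/p^rℤ)^N : gcd(a, p) = 1 coordinatewise-gcd with p^r equals 1} equals (1 − p^{−(N−1)}) / (1 − p^{−N}), where N = N_{d,n} = binomial(n+d, d); in particular it is 1 + O(p^{−(N−1)}). -/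
/-- The index type for monomials of degree `d` in `n+1` variables; its cardinality is
`N_{d,n} = binomial(n+d, d)`. -/
abbrev Mono (d n : ℕ) := {m : Fin (n + 1) → Fin (d + 1) // ∑ i, (m i : ℕ) = d}

/-- The singular series factor
`σ'(a; Q) = (Q / φ(Q)^{n+1}) · #{b ∈ ((ℤ/Qℤ)^×)^{n+1} : ⟨a, ν_{d,n}(b)⟩ ≡ 0 (mod Q)}`. -/
noncomputable def sigma' (d n Q : ℕ) (a : Mono d n → ZMod Q) : ℝ :=
  ((Q : ℝ) / (Nat.totient Q : ℝ) ^ (n + 1)) *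
    Nat.card {b : Fin (n + 1) → (ZMod Q)ˣ //
      ∑ m : Mono d n, a m * ∏ i, ((b i : ZMod Q)) ^ (m.1 i : ℕ) = 0}

/- ### Auxiliary lemmas -/

private lemma sum_split {ι M : Type*} [Fintype ι] [DecidableEq ι] [AddCommMonoid M]
    (m0 : ι) (g : ι → M) :
    ∑ i, g i = g m0 + ∑ i : {i // i ≠ m0}, g i.1 := by
  rw [← Finset.add_sum_erase _ g (Finset.mem_univ m0)]
  congr 1
  exact Finset.sum_subtype _ (fun x => by simp [Finset.mem_erase]) g

/-- The monomials of degree `d` in `n+1` variables biject with `Sym (Fin (n+1)) d`. -/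
private def monoEquivSym (d n : ℕ) : Mono d n ≃ Sym (Fin (n + 1)) d where
  toFun m := ⟨∑ i, Multiset.replicate (m.1 i : ℕ) i, by
    rw [← Multiset.sum_count_eq_card (s := Finset.univ) (fun a _ => Finset.mem_univ a)]
    simp only [Multiset.count_sum', Multiset.count_replicate]
    rw [Finset.sum_comm]
    simpa using m.2⟩
  invFun s := ⟨fun i => ⟨Multiset.count i s.1,
      Nat.lt_succ_of_le ((Multiset.count_le_card i s.1).trans (le_of_eq s.2))⟩, by
    simpa [Multiset.sum_count_eq_card] using s.2⟩
  left_inv m := by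
    ext i
    simp [Multiset.count_sum', Multiset.count_replicate]
  right_inv s := by
    apply Subtype.ext
    apply Multiset.ext.mpr
    intro a
    simp [Multiset.count_sum', Multiset.count_replicate]

private lemma card_mono (d n : ℕ) : Fintype.card (Mono d n) = (n + d).choose d := by
  rw [Fintype.card_congr (monoEquivSym d n), Sym.card_sym_eq_choose, Fintype.card_fin]
  congr 1
  omega

/-- Units in `ZMod (p^r)` are detected after reduction mod `p`. -/
private lemma isUnit_iff_cast {p r : ℕ} (hp : p.Prime) (hr : 1 ≤ r) (x : ZMod (p ^ r)) :
    IsUnit x ↔ ZMod.castHom (dvd_pow_self p (by omega : r ≠ 0)) (ZMod p) x ≠ 0 := by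
  haveI : Fact p.Prime := ⟨hp⟩
  haveI : NeZero (p ^ r) := ⟨pow_ne_zero r hp.pos.ne'⟩
  have hπ : (ZMod.castHom (dvd_pow_self p (by omega : r ≠ 0)) (ZMod p)) x
      = ((x.val : ℕ) : ZMod p) := by
    rw [ZMod.castHom_apply, ← ZMod.natCast_val]
  constructor
  · intro h h0
    have := h.map (ZMod.castHom (dvd_pow_self p (by omega : r ≠ 0)) (ZMod p))
    rw [h0] at this
    exact not_isUnit_zero this
  · intro h
    rw [hπ, Ne, ZMod.natCast_eq_zero_iff] at h
    have hcop : Nat.Coprime x.val p := ((Nat.Prime.coprime_iff_not_dvd hp).mpr h).symm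
    have : IsUnit ((x.val : ℕ) : ZMod (p ^ r)) := by
      rw [ZMod.isUnit_iff_coprime]
      exact Nat.Coprime.pow_right r hcop
    rwa [ZMod.natCast_zmod_val] at this

private lemma card_nonunits {p r : ℕ} (hp : p.Prime) (hr : 1 ≤ r) :
    Nat.card {x : ZMod (p ^ r) // ¬ IsUnit x} = p ^ (r - 1) := by
  classical
  haveI : NeZero (p ^ r) := ⟨pow_ne_zero r hp.pos.ne'⟩
  have e : {x : ZMod (p ^ r) // IsUnit x} ≃ (ZMod (p ^ r))ˣ :=
    { toFun := fun x => x.2.unit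
      invFun := fun u => ⟨u, u.isUnit⟩
      left_inv := fun x => Subtype.ext x.2.unit_spec
      right_inv := fun u => Units.ext u.isUnit.unit_spec }
  have h1 : Fintype.card {x : ZMod (p ^ r) // IsUnit x} = (p ^ r).totient := by
    rw [Fintype.card_congr e, ZMod.card_units_eq_totient]
  rw [Nat.card_eq_fintype_card, Fintype.card_subtype_compl, h1, ZMod.card,
    Nat.totient_prime_pow hp (by omega : 0 < r)]
  have h2 : p ^ r = p ^ (r - 1) * p := by
    rw [← pow_succ]
    congr 1
    omega
  have h3 : p ^ (r - 1) * p = p ^ (r - 1) * (p - 1) + p ^ (r - 1) := by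
    have := hp.two_le
    rw [← Nat.mul_succ]
    congr 1
    omega
  omega

private lemma card_allNonunit {ι : Type*} [Fintype ι] {p r : ℕ}
    (hp : p.Prime) (hr : 1 ≤ r) :
    Nat.card {f : ι → ZMod (p ^ r) // ∀ i, ¬ IsUnit (f i)}
      = p ^ ((r - 1) * Fintype.card ι) := by
  classical
  rw [Nat.card_congr (Equiv.subtypePiEquivPi
      (p := fun (_ : ι) (x : ZMod (p ^ r)) => ¬ IsUnit x)),
    Nat.card_pi]
  have h1 : ∀ i : ι, Nat.card {x : ZMod (p ^ r) // ¬ IsUnit x} = p ^ (r - 1) := fun i =>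
    card_nonunits hp hr
  rw [Finset.prod_congr rfl (fun i _ => h1 i), Finset.prod_const, Finset.card_univ, ← pow_mul]

private lemma sum_card_swap {α β : Type*} [Fintype α] [Fintype β] (R : α → β → Prop) :
    ∑ a, Nat.card {b // R a b} = ∑ b, Nat.card {a // R a b} := by
  classical
  simp_rw [Nat.card_eq_fintype_card, Fintype.card_subtype, Finset.card_filter]
  exact Finset.sum_comm

/-- Key count: for a coefficient vector `c` of units, the number of `a` with some unit
coordinate satisfying `∑ a m * c m = 0` is `p^{r(N-1)} - p^{(r-1)(N-1)}`. -/
private lemma count_a (d n p r : ℕ) (hp : p.Prime) (hr : 1 ≤ r)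
    (c : Mono d n → ZMod (p ^ r)) (hc : ∀ m, IsUnit (c m)) :
    Nat.card {a : Mono d n → ZMod (p ^ r) //
        (∃ m, IsUnit (a m)) ∧ ∑ m, a m * c m = 0}
      + p ^ ((r - 1) * ((n + d).choose d - 1))
    = p ^ (r * ((n + d).choose d - 1)) := by
  classical
  haveI : Fact p.Prime := ⟨hp⟩
  haveI : NeZero (p ^ r) := ⟨pow_ne_zero r hp.pos.ne'⟩
  obtain ⟨m0⟩ : Nonempty (Mono d n) := by
    rw [← Fintype.card_pos_iff, card_mono]
    exact Nat.choose_pos (Nat.le_add_left d n)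
  obtain ⟨u, hu⟩ := hc m0
  have huc : (↑u⁻¹ : ZMod (p ^ r)) * c m0 = 1 := by
    rw [← hu]; exact u.inv_mul
  have hπdef : True := trivial
  set π := ZMod.castHom (dvd_pow_self p (by omega : r ≠ 0)) (ZMod p) with hπ
  -- equivalence between the solution set and free coordinates
  let e : {a : Mono d n → ZMod (p ^ r) // ∑ m, a m * c m = 0}
      ≃ ({m : Mono d n // m ≠ m0} → ZMod (p ^ r)) :=
    { toFun := fun a m => a.1 m.1
      invFun := fun f => ⟨fun m => if h : m = m0 then
          -((↑u⁻¹ : ZMod (p ^ r)) * ∑ m' : {m // m ≠ m0}, f m' * c m'.1) else f ⟨m, h⟩, by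
        rw [sum_split m0]
        have h1 : ∀ m' : {m : Mono d n // m ≠ m0},
            (if h : m'.1 = m0 then
              -((↑u⁻¹ : ZMod (p ^ r)) * ∑ m' : {m // m ≠ m0}, f m' * c m'.1) else f ⟨m'.1, h⟩)
            = f m' := fun m' => by rw [dif_neg m'.2]
        simp only [h1, dif_pos, dite_true, eq_self_iff_true]
        linear_combination (-(∑ m' : {m : Mono d n // m ≠ m0}, f m' * c m'.1)) * huc⟩
      left_inv := by
        intro a
        apply Subtype.ext
        funext m
        dsimp only
        by_cases h : m = m0
        · subst h
          rw [dif_pos rfl]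
          have H : a.1 m * c m
              + ∑ m' : {m' : Mono d n // m' ≠ m}, a.1 m'.1 * c m'.1 = 0 := by
            rw [← sum_split m (fun m' => a.1 m' * c m')]
            exact a.2
          linear_combination (-(↑u⁻¹ : ZMod (p ^ r))) * H + a.1 m * huc
        · rw [dif_neg h]
      right_inv := by
        intro f
        funext m'
        dsimp only
        rw [dif_neg m'.2] }
  -- the all-nonunit part of the solution set corresponds to all-nonunit free coordinates
  have hiff : ∀ a : {a : Mono d n → ZMod (p ^ r) // ∑ m, a m * c m = 0},
      (∀ m, ¬ IsUnit (a.1 m)) ↔ (∀ m' : {m : Mono d n // m ≠ m0}, ¬ IsUnit (a.1 m'.1)) := by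
    intro a
    constructor
    · exact fun h m' => h m'.1
    · intro h m
      by_cases hm : m = m0
      · subst hm
        rw [isUnit_iff_cast hp hr, not_not, ← hπ]
        have H := congrArg π a.2
        rw [map_sum, map_zero] at H
        rw [sum_split m (fun m' => π (a.1 m' * c m'))] at H
        have hz : ∑ m' : {m' : Mono d n // m' ≠ m}, π (a.1 m'.1 * c m'.1) = 0 := by
          apply Finset.sum_eq_zero
          intro m' _
          have hz0 : π (a.1 m'.1) = 0 := by
            have hh := h m'
            rw [isUnit_iff_cast hp hr, not_not, ← hπ] at hh
            exact hh
          rw [map_mul, hz0, zero_mul]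
        rw [hz, add_zero, map_mul] at H
        have hπc : π (c m) ≠ 0 := ((hc m).map π).ne_zero
        exact (mul_eq_zero.mp H).resolve_right hπc
      · exact h ⟨m, hm⟩
  let e2 : {a : {a : Mono d n → ZMod (p ^ r) // ∑ m, a m * c m = 0} // ∀ m, ¬ IsUnit (a.1 m)} ≃
      {f : {m : Mono d n // m ≠ m0} → ZMod (p ^ r) // ∀ m', ¬ IsUnit (f m')} :=
    Equiv.subtypeEquiv e (fun a => hiff a)
  -- cardinalities
  have hcard_ne : Fintype.card {m : Mono d n // m ≠ m0} = (n + d).choose d - 1 := by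
    have h := Fintype.card_subtype_compl (fun m : Mono d n => m = m0)
    rw [Fintype.card_subtype_eq, card_mono] at h
    exact h
  have hcard_sols : Fintype.card {a : Mono d n → ZMod (p ^ r) // ∑ m, a m * c m = 0}
      = p ^ (r * ((n + d).choose d - 1)) := by
    rw [Fintype.card_congr e, Fintype.card_fun, ZMod.card, hcard_ne, ← pow_mul]
  have hcard_nonunit : Fintype.card
      {a : {a : Mono d n → ZMod (p ^ r) // ∑ m, a m * c m = 0} // ∀ m, ¬ IsUnit (a.1 m)}
      = p ^ ((r - 1) * ((n + d).choose d - 1)) := by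
    rw [← Nat.card_eq_fintype_card, Nat.card_congr e2, card_allNonunit hp hr, hcard_ne]
  -- assemble
  have emain : {a : Mono d n → ZMod (p ^ r) // (∃ m, IsUnit (a m)) ∧ ∑ m, a m * c m = 0}
      ≃ {x : {a : Mono d n → ZMod (p ^ r) // ∑ m, a m * c m = 0} // ∃ m, IsUnit (x.1 m)} :=
    (Equiv.subtypeEquivRight (fun a => and_comm)).trans
      (Equiv.subtypeSubtypeEquivSubtypeInter _ _).symm
  rw [Nat.card_congr emain, Nat.card_eq_fintype_card]
  have hcompl : Fintype.card
      {x : {a : Mono d n → ZMod (p ^ r) // ∑ m, a m * c m = 0} // ¬ ∃ m, IsUnit (x.1 m)}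
      = Fintype.card {a : Mono d n → ZMod (p ^ r) // ∑ m, a m * c m = 0}
        - Fintype.card
          {x : {a : Mono d n → ZMod (p ^ r) // ∑ m, a m * c m = 0} // ∃ m, IsUnit (x.1 m)} :=
    Fintype.card_subtype_compl _
  have hcompl2 : Fintype.card
      {x : {a : Mono d n → ZMod (p ^ r) // ∑ m, a m * c m = 0} // ¬ ∃ m, IsUnit (x.1 m)}
      = p ^ ((r - 1) * ((n + d).choose d - 1)) := by
    rw [Fintype.card_congr (Equiv.subtypeEquivRight (fun x => not_exists)), ← hcard_nonunit]
  have hle : Fintype.card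
      {x : {a : Mono d n → ZMod (p ^ r) // ∑ m, a m * c m = 0} // ∃ m, IsUnit (x.1 m)}
      ≤ Fintype.card {a : Mono d n → ZMod (p ^ r) // ∑ m, a m * c m = 0} :=
    Fintype.card_subtype_le _
  have h5 : p ^ ((r - 1) * ((n + d).choose d - 1))
      = p ^ (r * ((n + d).choose d - 1)) - Fintype.card
        {x : {a : Mono d n → ZMod (p ^ r) // ∑ m, a m * c m = 0} // ∃ m, IsUnit (x.1 m)} := by
    rw [← hcompl2, hcompl, hcard_sols]
  have hle' : Fintype.card
      {x : {a : Mono d n → ZMod (p ^ r) // ∑ m, a m * c m = 0} // ∃ m, IsUnit (x.1 m)}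
      ≤ p ^ (r * ((n + d).choose d - 1)) := hcard_sols ▸ hle
  rw [h5, Nat.add_sub_cancel' hle']

/-- Cardinality of the set of admissible `a`. -/
private lemma card_F (d n p r : ℕ) (hp : p.Prime) (hr : 1 ≤ r) :
    Nat.card {a : Mono d n → ZMod (p ^ r) // ∃ m, IsUnit (a m)}
      + p ^ ((r - 1) * ((n + d).choose d))
    = p ^ (r * ((n + d).choose d)) := by
  classical
  haveI : NeZero (p ^ r) := ⟨pow_ne_zero r hp.pos.ne'⟩
  set N := (n + d).choose d with hN
  have htot : Fintype.card (Mono d n → ZMod (p ^ r)) = p ^ (r * N) := by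
    rw [Fintype.card_fun, ZMod.card, card_mono, ← pow_mul]
  have hcompl : Fintype.card {a : Mono d n → ZMod (p ^ r) // ¬ ∃ m, IsUnit (a m)}
      = Fintype.card (Mono d n → ZMod (p ^ r))
        - Fintype.card {a : Mono d n → ZMod (p ^ r) // ∃ m, IsUnit (a m)} :=
    Fintype.card_subtype_compl _
  have hcompl2 : Fintype.card {a : Mono d n → ZMod (p ^ r) // ¬ ∃ m, IsUnit (a m)}
      = p ^ ((r - 1) * N) := by
    rw [← Nat.card_eq_fintype_card,
      Nat.card_congr (Equiv.subtypeEquivRight (fun a => not_exists)),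
      card_allNonunit hp hr, card_mono]
  have hle : Fintype.card {a : Mono d n → ZMod (p ^ r) // ∃ m, IsUnit (a m)}
      ≤ Fintype.card (Mono d n → ZMod (p ^ r)) := Fintype.card_subtype_le _
  rw [Nat.card_eq_fintype_card]
  have h5 : p ^ ((r - 1) * ((n + d).choose d))
      = p ^ (r * ((n + d).choose d))
        - Fintype.card {a : Mono d n → ZMod (p ^ r) // ∃ m, IsUnit (a m)} := by
    rw [← hcompl2, hcompl, htot]
  have hle' : Fintype.card {a : Mono d n → ZMod (p ^ r) // ∃ m, IsUnit (a m)}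
      ≤ p ^ (r * ((n + d).choose d)) := htot ▸ hle
  rw [h5, Nat.add_sub_cancel' hle']

set_option maxHeartbeats 2000000 in
/-- For `d ≥ 2`, `n ≥ 2` and any prime power `p^r`, the average of `σ'(a; p^r)` over
vectors `a ∈ (ℤ/p^rℤ)^{N_{d,n}}` whose coordinates have gcd `1` with `p^r` (i.e. some
coordinate is a unit) equals `(1 − p^{−(N−1)}) / (1 − p^{−N})` where
`N = N_{d,n} = binomial(n+d, d)`. -/
theorem sigma'_average (d n : ℕ) (hd : 2 ≤ d) (hn : 2 ≤ n)
    (p r : ℕ) (hp : p.Prime) (hr : 1 ≤ r) :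
    (∑ᶠ a : {a : Mono d n → ZMod (p ^ r) // ∃ m, IsUnit (a m)},
        sigma' d n (p ^ r) a.1) /
      (Nat.card {a : Mono d n → ZMod (p ^ r) // ∃ m, IsUnit (a m)} : ℝ)
    = (1 - (p : ℝ) ^ (-(((n + d).choose d : ℤ) - 1))) /
      (1 - (p : ℝ) ^ (-((n + d).choose d : ℤ))) := by
  classical
  haveI : Fact p.Prime := ⟨hp⟩
  haveI : NeZero (p ^ r) := ⟨pow_ne_zero r hp.pos.ne'⟩
  set Q := p ^ r with hQ
  set N := (n + d).choose d with hN
  have hNpos : 0 < N := Nat.choose_pos (by omega)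
  obtain ⟨M, hM⟩ : ∃ M, N = M + 1 := ⟨N - 1, by omega⟩
  obtain ⟨e, he⟩ : ∃ e, r = e + 1 := ⟨r - 1, by omega⟩
  -- the nat-level counts
  have hKb : ∀ b : Fin (n + 1) → (ZMod Q)ˣ,
      Nat.card {a : {a : Mono d n → ZMod Q // ∃ m, IsUnit (a m)} //
          ∑ m : Mono d n, a.1 m * ∏ i, ((b i : ZMod Q)) ^ (m.1 i : ℕ) = 0}
        = p ^ (r * (N - 1)) - p ^ ((r - 1) * (N - 1)) := by
    intro b
    have hc : ∀ m : Mono d n, IsUnit (∏ i, ((b i : ZMod Q)) ^ (m.1 i : ℕ)) := by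
      intro m
      exact Finset.prod_induction _ IsUnit (fun _ _ => IsUnit.mul) isUnit_one
        (fun i _ => (b i).isUnit.pow _)
    have := count_a d n p r hp hr (fun m => ∏ i, ((b i : ZMod Q)) ^ (m.1 i : ℕ)) hc
    rw [Nat.card_congr (Equiv.subtypeSubtypeEquivSubtypeInter
      (fun a : Mono d n → ZMod Q => ∃ m, IsUnit (a m))
      (fun a => ∑ m : Mono d n, a m * ∏ i, ((b i : ZMod Q)) ^ (m.1 i : ℕ) = 0))]
    exact Nat.eq_sub_of_add_eq this
  have hswap : ∑ a : {a : Mono d n → ZMod Q // ∃ m, IsUnit (a m)},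
      Nat.card {b : Fin (n + 1) → (ZMod Q)ˣ //
        ∑ m : Mono d n, a.1 m * ∏ i, ((b i : ZMod Q)) ^ (m.1 i : ℕ) = 0}
      = (Q.totient) ^ (n + 1) * (p ^ (r * (N - 1)) - p ^ ((r - 1) * (N - 1))) := by
    have hsw : ∑ a : {a : Mono d n → ZMod Q // ∃ m, IsUnit (a m)},
        Nat.card {b : Fin (n + 1) → (ZMod Q)ˣ //
          ∑ m : Mono d n, a.1 m * ∏ i, ((b i : ZMod Q)) ^ (m.1 i : ℕ) = 0}
        = ∑ b : Fin (n + 1) → (ZMod Q)ˣ,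
          Nat.card {a : {a : Mono d n → ZMod Q // ∃ m, IsUnit (a m)} //
            ∑ m : Mono d n, a.1 m * ∏ i, ((b i : ZMod Q)) ^ (m.1 i : ℕ) = 0} :=
      sum_card_swap _
    rw [hsw]
    simp only [hKb]
    rw [Finset.sum_const, Finset.card_univ, Fintype.card_fun,
      ZMod.card_units_eq_totient, Fintype.card_fin, smul_eq_mul]
  -- numerator as a real number
  have hnum : (∑ᶠ a : {a : Mono d n → ZMod Q // ∃ m, IsUnit (a m)},
      sigma' d n Q a.1)
      = ((Q : ℝ) / (Q.totient : ℝ) ^ (n + 1)) *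
        ((Q.totient : ℝ) ^ (n + 1) *
          ((p : ℝ) ^ (r * (N - 1)) - (p : ℝ) ^ ((r - 1) * (N - 1)))) := by
    rw [finsum_eq_sum_of_fintype]
    have h1 : (∑ a : {a : Mono d n → ZMod Q // ∃ m, IsUnit (a m)}, sigma' d n Q a.1)
        = ((Q : ℝ) / (Q.totient : ℝ) ^ (n + 1)) *
          ∑ a : {a : Mono d n → ZMod Q // ∃ m, IsUnit (a m)},
            ((Nat.card {b : Fin (n + 1) → (ZMod Q)ˣ //
              ∑ m : Mono d n, a.1 m * ∏ i, ((b i : ZMod Q)) ^ (m.1 i : ℕ) = 0} : ℕ) : ℝ) := by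
      rw [Finset.mul_sum]
      exact Finset.sum_congr rfl (fun a _ => rfl)
    have hle : p ^ ((r - 1) * (N - 1)) ≤ p ^ (r * (N - 1)) :=
      Nat.pow_le_pow_right hp.pos (Nat.mul_le_mul_right _ (Nat.sub_le r 1))
    have hS : (∑ a : {a : Mono d n → ZMod Q // ∃ m, IsUnit (a m)},
          ((Nat.card {b : Fin (n + 1) → (ZMod Q)ˣ //
            ∑ m : Mono d n, a.1 m * ∏ i, ((b i : ZMod Q)) ^ (m.1 i : ℕ) = 0} : ℕ) : ℝ))
        = ((Q.totient : ℝ) ^ (n + 1) *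
          ((p : ℝ) ^ (r * (N - 1)) - (p : ℝ) ^ ((r - 1) * (N - 1)))) := by
      rw [← Nat.cast_sum, hswap]
      push_cast [Nat.cast_sub hle]
      ring
    rw [h1, hS]
  rw [hnum]
  -- denominator
  have hD := card_F d n p r hp hr
  have hDle : p ^ ((r - 1) * N) ≤ p ^ (r * N) :=
    Nat.pow_le_pow_right hp.pos (Nat.mul_le_mul_right _ (Nat.sub_le r 1))
  have hDcast : (Nat.card {a : Mono d n → ZMod Q // ∃ m, IsUnit (a m)} : ℝ)
      = (p : ℝ) ^ (r * N) - (p : ℝ) ^ ((r - 1) * N) := by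
    have : Nat.card {a : Mono d n → ZMod Q // ∃ m, IsUnit (a m)}
        = p ^ (r * N) - p ^ ((r - 1) * N) := Nat.eq_sub_of_add_eq hD
    rw [this]
    push_cast [Nat.cast_sub hDle]
    ring
  rw [hDcast]
  -- real arithmetic
  have hx1 : (1 : ℝ) < (p : ℝ) := by exact_mod_cast hp.one_lt
  have hx0 : (0 : ℝ) < (p : ℝ) := by linarith
  have hT : ((Q.totient : ℝ)) ^ (n + 1) ≠ 0 := by
    have h1 : 0 < Q.totient := Nat.totient_pos.mpr (pow_pos hp.pos r)
    positivity
  have hQcast : (Q : ℝ) = (p : ℝ) ^ r := by rw [hQ]; push_cast; ring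
  have hsimp : ((Q : ℝ) / (Q.totient : ℝ) ^ (n + 1)) *
        ((Q.totient : ℝ) ^ (n + 1) *
          ((p : ℝ) ^ (r * (N - 1)) - (p : ℝ) ^ ((r - 1) * (N - 1))))
      = (p : ℝ) ^ r * ((p : ℝ) ^ (r * (N - 1)) - (p : ℝ) ^ ((r - 1) * (N - 1))) := by
    rw [hQcast]
    field_simp
  rw [hsimp]
  -- rewrite the right-hand side without zpow
  have hz1 : (p : ℝ) ^ (-(((n + d).choose d : ℤ) - 1)) = ((p : ℝ) ^ M)⁻¹ := by
    have hexp : (-(((n + d).choose d : ℤ) - 1)) = -(M : ℤ) := by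
      rw [← hN, hM]; push_cast; ring
    rw [hexp, zpow_neg, zpow_natCast]
  have hz2 : (p : ℝ) ^ (-((n + d).choose d : ℤ)) = ((p : ℝ) ^ (M + 1))⁻¹ := by
    have hexp : (-((n + d).choose d : ℤ)) = -((M + 1 : ℕ) : ℤ) := by
      rw [← hN, hM]
    rw [hexp, zpow_neg, zpow_natCast]
  rw [hz1, hz2]
  -- now replace the exponents
  have h1 : r * (N - 1) = (e + 1) * M := by rw [hM, he, Nat.add_sub_cancel]
  have h2 : (r - 1) * (N - 1) = e * M := by
    rw [hM, he, Nat.add_sub_cancel, Nat.add_sub_cancel]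
  have h3 : r * N = (e + 1) * (M + 1) := by rw [hM, he]
  have h4 : (r - 1) * N = e * (M + 1) := by rw [hM, he, Nat.add_sub_cancel]
  rw [h1, h2, h3, h4, he]
  have hexplt : e * (M + 1) < (e + 1) * (M + 1) := by
    have h := Nat.mul_lt_mul_of_pos_right (Nat.lt_succ_self e) (Nat.succ_pos M)
    simpa using h
  have hDne : (p : ℝ) ^ ((e + 1) * (M + 1)) - (p : ℝ) ^ (e * (M + 1)) ≠ 0 := by
    have : (p : ℝ) ^ (e * (M + 1)) < (p : ℝ) ^ ((e + 1) * (M + 1)) :=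
      pow_lt_pow_right₀ hx1 hexplt
    linarith
  have hpM1 : (1 : ℝ) < (p : ℝ) ^ (M + 1) := one_lt_pow₀ hx1 (Nat.succ_ne_zero M)
  have hde2 : (1 : ℝ) - ((p : ℝ) ^ (M + 1))⁻¹ ≠ 0 := by
    have : ((p : ℝ) ^ (M + 1))⁻¹ < 1 := inv_lt_one_of_one_lt₀ hpM1
    linarith
  rw [div_eq_div_iff hDne hde2]
  have hxne : (p : ℝ) ≠ 0 := ne_of_gt hx0
  field_simp
  ring
end

section
/- Let d ≥ 2, n ≥ 3, p prime, r ≥ 1 and 0 ≤ e ≤ r. Suppose a ∈ (ℤ/p^rℤ)^{N_{d,n}} is such that there exists x ∈ ((ℤ/p^rℤ)^×)^{n+1} with f_a(x) ≡ 0 mod p^r and v_p(∇f_a(x)) = e. Then σ'(a; p^r) ≥ p^{−(e+1)n}. -/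
/-- Evaluation of the degree-`d` form with coefficient vector `a` at `x`. -/
def evalForm (d n Q : ℕ) (a : Mono d n → ZMod Q) (x : Fin (n + 1) → ZMod Q) : ZMod Q :=
  ∑ m : Mono d n, a m * ∏ i, x i ^ (m.1 i : ℕ)

/-- The `j`-th formal partial derivative of the form `f_a`, evaluated at `x`. -/
def pderivForm (d n Q : ℕ) (a : Mono d n → ZMod Q) (x : Fin (n + 1) → ZMod Q)
    (j : Fin (n + 1)) : ZMod Q :=
  ∑ m : Mono d n, a m * ((m.1 j : ℕ) : ZMod Q) *
    ∏ i, x i ^ (if i = j then (m.1 i : ℕ) - 1 else (m.1 i : ℕ))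

open Finset

section IntForms

variable {ι : Type*} [Fintype ι] {N : ℕ}

/-- An integer "form": sum over an index type of coefficient times monomial. -/
def intForm (T : ι → ℤ) (E : ι → Fin N → ℕ) (Y : Fin N → ℤ) : ℤ :=
  ∑ c, T c * ∏ i, Y i ^ E c i

/-- Formal partial derivative of `intForm`, itself an `intForm`. -/
def intPderiv (T : ι → ℤ) (E : ι → Fin N → ℕ) (k : Fin N) : (Fin N → ℤ) → ℤ :=
  intForm (fun c => T c * (E c k : ℤ)) (fun c i => if i = k then E c i - 1 else E c i)

lemma sq_dvd_key (a s : ℤ) (m : ℕ) :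
    s ^ 2 ∣ (a + s) ^ m - a ^ m - (m : ℤ) * a ^ (m - 1) * s := by
  induction m with
  | zero => simp
  | succ m ih =>
    rcases Nat.eq_zero_or_pos m with hm | hm
    · subst hm; exact ⟨0, by ring⟩
    · obtain ⟨m', rfl⟩ := Nat.exists_eq_succ_of_ne_zero hm.ne'
      obtain ⟨K, hK⟩ := ih
      have h1 : (a + s) ^ (m' + 1) = a ^ (m' + 1) + ((m' : ℤ) + 1) * a ^ m' * s + s ^ 2 * K := by
        have h := hK
        simp only [Nat.succ_eq_add_one, Nat.add_sub_cancel] at h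
        push_cast at h
        linarith
      refine ⟨((m' : ℤ) + 1) * a ^ m' + (a + s) * K, ?_⟩
      simp only [Nat.succ_eq_add_one, Nat.add_sub_cancel] at hK ⊢
      push_cast
      rw [pow_succ (a + s), h1, pow_succ a]
      ring

lemma prod_pow_update (Y : Fin N → ℤ) (k : Fin N) (v : ℤ) (E : Fin N → ℕ) :
    ∏ i, Function.update Y k v i ^ E i = v ^ E k * ∏ i ∈ univ.erase k, Y i ^ E i := by
  rw [← Finset.mul_prod_erase Finset.univ (fun i => Function.update Y k v i ^ E i)
    (Finset.mem_univ k)]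
  simp only [Function.update_self]
  congr 1
  exact Finset.prod_congr rfl fun i hi => by
    rw [Function.update_of_ne (Finset.mem_erase.mp hi).1]

lemma prod_pow_base (Y : Fin N → ℤ) (k : Fin N) (E : Fin N → ℕ) :
    ∏ i, Y i ^ E i = Y k ^ E k * ∏ i ∈ univ.erase k, Y i ^ E i :=
  (Finset.mul_prod_erase Finset.univ (fun i => Y i ^ E i) (Finset.mem_univ k)).symm

lemma prod_pow_ite (Y : Fin N → ℤ) (k : Fin N) (E : Fin N → ℕ) :
    ∏ i, Y i ^ (if i = k then E i - 1 else E i)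
      = Y k ^ (E k - 1) * ∏ i ∈ univ.erase k, Y i ^ E i := by
  rw [← Finset.mul_prod_erase Finset.univ (fun i => Y i ^ (if i = k then E i - 1 else E i))
    (Finset.mem_univ k)]
  simp only [if_pos rfl]
  congr 1
  exact Finset.prod_congr rfl fun i hi => by
    rw [if_neg (Finset.mem_erase.mp hi).1]

lemma taylor1 (T : ι → ℤ) (E : ι → Fin N → ℕ) (Y : Fin N → ℤ) (k : Fin N) (s : ℤ) :
    s ^ 2 ∣ intForm T E (Function.update Y k (Y k + s)) - intForm T E Y
      - s * intPderiv T E k Y := by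
  have hrw : intForm T E (Function.update Y k (Y k + s)) - intForm T E Y
        - s * intPderiv T E k Y
      = ∑ c, T c * ((Y k + s) ^ E c k - Y k ^ E c k - (E c k : ℤ) * Y k ^ (E c k - 1) * s) *
          ∏ i ∈ univ.erase k, Y i ^ E c i := by
    simp only [intPderiv, intForm]
    rw [Finset.mul_sum, ← Finset.sum_sub_distrib, ← Finset.sum_sub_distrib]
    refine Finset.sum_congr rfl fun c _ => ?_
    rw [prod_pow_update, prod_pow_base Y k, prod_pow_ite]
    ring
  rw [hrw]
  exact Finset.dvd_sum fun c _ => ((sq_dvd_key (Y k) s (E c k)).mul_left (T c)).mul_right _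

lemma lip1 (T : ι → ℤ) (E : ι → Fin N → ℕ) (Y : Fin N → ℤ) (k : Fin N) (s : ℤ) :
    s ∣ intForm T E (Function.update Y k (Y k + s)) - intForm T E Y := by
  obtain ⟨K, hK⟩ := taylor1 T E Y k s
  exact ⟨intPderiv T E k Y + s * K, by linear_combination hK⟩

lemma lip (T : ι → ℤ) (E : ι → Fin N → ℕ) (q : ℤ) (Y Z : Fin N → ℤ)
    (h : ∀ i, q ∣ Z i - Y i) :
    q ∣ intForm T E Z - intForm T E Y := by
  have H : ∀ S : Finset (Fin N),
      q ∣ intForm T E (fun i => if i ∈ S then Z i else Y i) - intForm T E Y := by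
    intro S
    induction S using Finset.induction_on with
    | empty => simp
    | insert k S hk IH =>
      have hupd : (fun i => if i ∈ insert k S then Z i else Y i)
          = Function.update (fun i => if i ∈ S then Z i else Y i) k
              ((if k ∈ S then Z k else Y k) + (Z k - Y k)) := by
        funext i
        rcases eq_or_ne i k with rfl | hik
        · simp [hk]
        · simp [Function.update_of_ne hik, Finset.mem_insert, hik]
      rw [hupd]
      have h2 : q ∣ intForm T E (Function.update (fun i => if i ∈ S then Z i else Y i) k
            ((if k ∈ S then Z k else Y k) + (Z k - Y k)))
          - intForm T E (fun i => if i ∈ S then Z i else Y i) :=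
        (h k).trans (lip1 T E (fun i => if i ∈ S then Z i else Y i) k (Z k - Y k))
      have h3 := dvd_add h2 IH
      rwa [sub_add_sub_cancel] at h3
  have := H Finset.univ
  simpa using this

end IntForms
section IntForms2
open Finset
variable {ι : Type*} [Fintype ι] {N : ℕ}

lemma taylor_path (T : ι → ℤ) (E : ι → Fin N → ℕ) (q : ℤ) (e : ℕ) (Y Z : Fin N → ℤ)
    (h : ∀ i, q ^ (e + 1) ∣ Z i - Y i) (hD : ∀ i, q ^ e ∣ intPderiv T E i Y) :
    q ^ (2 * e + 1) ∣ intForm T E Z - intForm T E Y := by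
  have H : ∀ S : Finset (Fin N),
      q ^ (2 * e + 1) ∣ intForm T E (fun i => if i ∈ S then Z i else Y i) - intForm T E Y := by
    intro S
    induction S using Finset.induction_on with
    | empty => simp
    | insert k S hk IH =>
      set W : Fin N → ℤ := fun i => if i ∈ S then Z i else Y i with hW
      have hupd : (fun i => if i ∈ insert k S then Z i else Y i)
          = Function.update W k (W k + (Z k - Y k)) := by
        funext i
        rcases eq_or_ne i k with rfl | hik
        · simp [hW, hk]
        · simp [hW, Function.update_of_ne hik, Finset.mem_insert, hik]
      rw [hupd]
      -- the step difference
      obtain ⟨K, hK⟩ := taylor1 T E W k (Z k - Y k)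
      have hWY : ∀ i, q ^ (e + 1) ∣ W i - Y i := by
        intro i
        by_cases hi : i ∈ S <;> simp [hW, hi, h i]
      have hDk : q ^ e ∣ intPderiv T E k W := by
        have h1 : q ^ (e + 1) ∣ intPderiv T E k W - intPderiv T E k Y := by
          unfold intPderiv
          exact lip _ _ _ _ _ hWY
        have h2 : q ^ e ∣ intPderiv T E k W - intPderiv T E k Y :=
          (pow_dvd_pow q (Nat.le_succ e)).trans h1
        obtain ⟨u, hu⟩ := h2
        obtain ⟨v, hv⟩ := hD k
        exact ⟨u + v, by linarith⟩
      have hstep : q ^ (2 * e + 1) ∣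
          intForm T E (Function.update W k (W k + (Z k - Y k))) - intForm T E W := by
        have hs : q ^ (2 * e + 1) ∣ (Z k - Y k) * intPderiv T E k W := by
          have : q ^ (e + 1) * q ^ e ∣ (Z k - Y k) * intPderiv T E k W :=
            mul_dvd_mul (h k) hDk
          rwa [← pow_add, show e + 1 + e = 2 * e + 1 by omega] at this
        have hsq : q ^ (2 * e + 1) ∣ (Z k - Y k) ^ 2 * K := by
          have h1 : q ^ (e + 1) * q ^ (e + 1) ∣ (Z k - Y k) * (Z k - Y k) :=
            mul_dvd_mul (h k) (h k)
          have h2 : q ^ (2 * e + 1) ∣ (Z k - Y k) * (Z k - Y k) := by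
            refine dvd_trans ?_ h1
            rw [← pow_add]
            exact pow_dvd_pow q (by omega)
          rw [sq]
          exact h2.mul_right K
        obtain ⟨u, hu⟩ := hs
        obtain ⟨v, hv⟩ := hsq
        exact ⟨u + v, by linarith⟩
      have h3 := dvd_add hstep IH
      rwa [sub_add_sub_cancel] at h3
  have := H Finset.univ
  simpa using this

lemma hensel_lift (T : ι → ℤ) (E : ι → Fin N → ℕ)
    (p : ℕ) (hp : p.Prime) (r e : ℕ) (j : Fin N) (X Y : Fin N → ℤ)
    (hF : (p : ℤ) ^ r ∣ intForm T E X)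
    (hD : ∀ i, (p : ℤ) ^ e ∣ intPderiv T E i X)
    (hc : 2 * e + 1 < r → ¬ (p : ℤ) ^ (e + 1) ∣ intPderiv T E j X)
    (hY : ∀ i, (p : ℤ) ^ (e + 1) ∣ Y i - X i) :
    ∃ t : ℤ, (p : ℤ) ^ r ∣ intForm T E (Function.update Y j (Y j + (p : ℤ) ^ (e + 1) * t)) := by
  haveI : Fact p.Prime := ⟨hp⟩
  set q : ℤ := (p : ℤ) with hq
  have hYt : ∀ (t : ℤ) (i : Fin N),
      q ^ (e + 1) ∣ Function.update Y j (Y j + q ^ (e + 1) * t) i - X i := by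
    intro t i
    rcases eq_or_ne i j with rfl | hij
    · simp only [Function.update_self]
      have hrw : Y i + q ^ (e + 1) * t - X i = (Y i - X i) + q ^ (e + 1) * t := by ring
      rw [hrw]
      exact dvd_add (hY i) (Dvd.intro _ rfl)
    · rw [Function.update_of_ne hij]; exact hY i
  have main : ∀ k : ℕ, ∃ t : ℤ,
      q ^ (min (2 * e + 1 + k) r) ∣ intForm T E (Function.update Y j (Y j + q ^ (e + 1) * t)) := by
    intro k
    induction k with
    | zero =>
      refine ⟨0, ?_⟩
      have h1 : q ^ (2 * e + 1) ∣
          intForm T E (Function.update Y j (Y j + q ^ (e + 1) * 0)) - intForm T E X :=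
        taylor_path T E q e X _ (hYt 0) hD
      obtain ⟨K, hK⟩ := h1
      obtain ⟨L, hL⟩ := hF
      have hsum : intForm T E (Function.update Y j (Y j + q ^ (e + 1) * 0))
          = q ^ r * L + q ^ (2 * e + 1) * K := by linarith
      rw [hsum]
      exact dvd_add ((pow_dvd_pow q (by omega : min (2 * e + 1 + 0) r ≤ r)).mul_right L)
        ((pow_dvd_pow q (by omega : min (2 * e + 1 + 0) r ≤ 2 * e + 1)).mul_right K)
    | succ k IH =>
      obtain ⟨t, ht⟩ := IH
      by_cases hrk : r ≤ 2 * e + 1 + k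
      · refine ⟨t, ?_⟩
        rw [min_eq_right (by omega)]
        rwa [min_eq_right hrk] at ht
      · push_neg at hrk
        rw [min_eq_left (le_of_lt hrk)] at ht
        obtain ⟨B, hB⟩ := ht
        set Yt := Function.update Y j (Y j + q ^ (e + 1) * t) with hYtdef
        have hDYtX : q ^ (e + 1) ∣ intPderiv T E j Yt - intPderiv T E j X := by
          unfold intPderiv
          exact lip _ _ _ _ _ (hYt t)
        obtain ⟨c0, hc0⟩ := hD j
        obtain ⟨w, hw⟩ := hDYtX
        have hDYt : intPderiv T E j Yt = q ^ e * (c0 + q * w) := by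
          have hpow : q ^ (e + 1) = q ^ e * q := pow_succ q e
          rw [mul_add]
          rw [hpow] at hw
          linarith
        have hnc : ¬ (q ∣ c0 + q * w) := by
          intro hd
          refine hc (by omega) ?_
          obtain ⟨z, hz⟩ := hd
          refine ⟨z - w, ?_⟩
          rw [hc0, pow_succ]
          have : c0 = q * z - q * w := by linarith
          rw [this]; ring
        have hcwzmod : ((c0 + q * w : ℤ) : ZMod p) ≠ 0 := by
          rw [Ne, ZMod.intCast_zmod_eq_zero_iff_dvd]
          exact hnc
        set β : ZMod p := (-(B : ℤ) : ZMod p) * ((c0 + q * w : ℤ) : ZMod p)⁻¹ with hβ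
        set y : ℤ := (β.val : ℤ) with hy0
        have hycast : ((y : ℤ) : ZMod p) = β := by
          rw [hy0]
          push_cast
          exact ZMod.natCast_rightInverse β
        have hy : q ∣ B + y * (c0 + q * w) := by
          have h0 : ((B + y * (c0 + q * w) : ℤ) : ZMod p) = 0 := by
            push_cast
            push_cast at hycast
            rw [hycast, hβ]
            have hinv : ((c0 + q * w : ℤ) : ZMod p)⁻¹ * ((c0 + q * w : ℤ) : ZMod p) = 1 :=
              inv_mul_cancel₀ hcwzmod
            push_cast at hinv ⊢
            linear_combination (-(B : ZMod p)) * hinv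
          rwa [ZMod.intCast_zmod_eq_zero_iff_dvd] at h0
        refine ⟨t + q ^ k * y, ?_⟩
        have hYtj : Yt j = Y j + q ^ (e + 1) * t := Function.update_self _ _ _
        have hupd : Function.update Y j (Y j + q ^ (e + 1) * (t + q ^ k * y))
            = Function.update Yt j (Yt j + q ^ (e + 1 + k) * y) := by
          rw [hYtdef, Function.update_idem]
          simp only [Function.update_self]
          rw [pow_add]
          congr 1
          ring
        rw [hupd]
        obtain ⟨K, hK⟩ := taylor1 T E Yt j (q ^ (e + 1 + k) * y)
        obtain ⟨z, hz⟩ := hy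
        have hexpr : intForm T E (Function.update Yt j (Yt j + q ^ (e + 1 + k) * y))
            = q ^ (2 * e + 2 + k) * (z + q ^ k * (y ^ 2 * K)) := by
          have hzz : B + y * (c0 + q * w) = q * z := hz
          linear_combination hK + (q ^ (e + 1 + k) * y) * hDYt + hB
            + q ^ (2 * e + 1 + k) * hzz
        rw [hexpr]
        exact (pow_dvd_pow q (by omega : min (2 * e + 1 + (k + 1)) r ≤ 2 * e + 2 + k)).mul_right _
  obtain ⟨t, ht⟩ := main r
  rw [min_eq_right (by omega)] at ht
  exact ⟨t, ht⟩

end IntForms2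
lemma zmod_int_dvd_lift {Q : ℕ} [NeZero Q] {c z : ℤ} (hcQ : c ∣ (Q : ℤ))
    (h : (c : ZMod Q) ∣ (z : ZMod Q)) : c ∣ z := by
  obtain ⟨w, hw⟩ := h
  have h0 : ((z - c * (w.val : ℤ) : ℤ) : ZMod Q) = 0 := by
    push_cast
    rw [ZMod.natCast_rightInverse w, ← hw]
    ring
  rw [ZMod.intCast_zmod_eq_zero_iff_dvd] at h0
  have h1 : c ∣ z - c * (w.val : ℤ) := hcQ.trans h0
  have h2 : c ∣ c * (w.val : ℤ) := Dvd.intro _ rfl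
  have := dvd_add h1 h2
  rwa [sub_add_cancel] at this
/-- Let `d ≥ 2`, `n ≥ 3`, `p` prime, `r ≥ 1` and `0 ≤ e ≤ r`. If there is a unit tuple
`x` with `f_a(x) ≡ 0 (mod p^r)` and `v_p(∇f_a(x)) = e`, then
`σ'(a; p^r) ≥ p^{−(e+1)n}`. -/
theorem sigma'_lower_bound (d n : ℕ) (hd : 2 ≤ d) (hn : 3 ≤ n)
    (p r e : ℕ) (hp : p.Prime) (hr : 1 ≤ r) (he : e ≤ r)
    (a : Mono d n → ZMod (p ^ r)) (x : Fin (n + 1) → (ZMod (p ^ r))ˣ)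
    (hx0 : evalForm d n (p ^ r) a (fun i => (x i : ZMod (p ^ r))) = 0)
    (hdvd : ∀ j, ((p : ZMod (p ^ r))) ^ e ∣
      pderivForm d n (p ^ r) a (fun i => (x i : ZMod (p ^ r))) j)
    (hmax : e < r → ∃ j, ¬ ((p : ZMod (p ^ r))) ^ (e + 1) ∣
      pderivForm d n (p ^ r) a (fun i => (x i : ZMod (p ^ r))) j) :
    (p : ℝ) ^ (-(((e + 1) * n : ℕ) : ℤ)) ≤ sigma' d n (p ^ r) a := by
  classical
  haveI : Fact p.Prime := ⟨hp⟩
  haveI hQnz : NeZero (p ^ r) := ⟨pow_ne_zero _ hp.pos.ne'⟩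
  haveI hsnz : NeZero (p ^ (r - e - 1)) := ⟨pow_ne_zero _ hp.pos.ne'⟩
  have hr3 : r ≤ (e + 1) + (r - e - 1) := by omega
  set A : Mono d n → ℤ := fun m => ((a m).val : ℤ) with hA
  set E : Mono d n → Fin (n + 1) → ℕ := fun m i => (m.1 i : ℕ) with hE
  set X : Fin (n + 1) → ℤ := fun i => (((x i : ZMod (p ^ r))).val : ℤ) with hX
  have hQcast : ((p ^ r : ℕ) : ℤ) = (p : ℤ) ^ r := by push_cast; ring
  have hAc : ∀ m, ((A m : ℤ) : ZMod (p ^ r)) = a m := by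
    intro m; simp only [hA]; push_cast; exact ZMod.natCast_rightInverse _
  have hXc : ∀ i, ((X i : ℤ) : ZMod (p ^ r)) = (x i : ZMod (p ^ r)) := by
    intro i; simp only [hX]; push_cast; exact ZMod.natCast_rightInverse _
  have hFcast : ∀ Y : Fin (n + 1) → ℤ, ((intForm A E Y : ℤ) : ZMod (p ^ r))
      = ∑ m : Mono d n, a m * ∏ i, ((Y i : ℤ) : ZMod (p ^ r)) ^ E m i := by
    intro Y
    rw [intForm]
    push_cast
    exact Finset.sum_congr rfl fun m _ => by rw [hAc]
  have hDevalX : ∀ k, ((intPderiv A E k X : ℤ) : ZMod (p ^ r))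
      = pderivForm d n (p ^ r) a (fun i => (x i : ZMod (p ^ r))) k := by
    intro k
    rw [intPderiv, intForm, pderivForm]
    push_cast
    refine Finset.sum_congr rfl fun m _ => ?_
    rw [hAc]
    congr 1
    refine Finset.prod_congr rfl fun i _ => ?_
    rw [hXc]
  have hFXdvd : (p : ℤ) ^ r ∣ intForm A E X := by
    have h0 : ((intForm A E X : ℤ) : ZMod (p ^ r)) = 0 := by
      rw [hFcast]
      rw [evalForm] at hx0
      rw [← hx0]
      refine Finset.sum_congr rfl fun m _ => ?_
      congr 1
      refine Finset.prod_congr rfl fun i _ => ?_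
      rw [hXc]
    rw [ZMod.intCast_zmod_eq_zero_iff_dvd, hQcast] at h0
    exact h0
  have hDdvd : ∀ i, (p : ℤ) ^ e ∣ intPderiv A E i X := by
    intro i
    refine zmod_int_dvd_lift (Q := p ^ r) (c := (p : ℤ) ^ e) ?_ ?_
    · rw [hQcast]; exact pow_dvd_pow _ he
    · obtain ⟨w, hw⟩ := hdvd i
      refine ⟨w, ?_⟩
      rw [hDevalX i]
      rw [hw]
      push_cast
      ring
  have hex : ∃ j : Fin (n + 1), 2 * e + 1 < r → ¬ (p : ℤ) ^ (e + 1) ∣ intPderiv A E j X := by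
    by_cases h2 : 2 * e + 1 < r
    · obtain ⟨j, hj⟩ := hmax (by omega)
      refine ⟨j, fun _ hdj => hj ?_⟩
      obtain ⟨w, hw⟩ := hdj
      refine ⟨((w : ℤ) : ZMod (p ^ r)), ?_⟩
      rw [← hDevalX j, hw]
      push_cast
      ring
    · exact ⟨0, fun h => absurd h h2⟩
  obtain ⟨j, hcj⟩ := hex
  -- construction of many unit solutions
  have key : ∀ u' : Fin n → ZMod (p ^ (r - e - 1)),
      ∃ b : {b : Fin (n + 1) → (ZMod (p ^ r))ˣ //
        ∑ m : Mono d n, a m * ∏ i, ((b i : ZMod (p ^ r))) ^ (m.1 i : ℕ) = 0},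
      ∀ i : Fin n, ((b.1 (j.succAbove i) : ZMod (p ^ r)))
        = ((X (j.succAbove i) + (p : ℤ) ^ (e + 1) * ((u' i).val : ℤ) : ℤ) : ZMod (p ^ r)) := by
    intro u'
    set uZ : Fin (n + 1) → ℤ := j.insertNth 0 (fun i => ((u' i).val : ℤ)) with huZ
    set Y : Fin (n + 1) → ℤ := fun k => X k + (p : ℤ) ^ (e + 1) * uZ k with hY
    have hYX : ∀ k, (p : ℤ) ^ (e + 1) ∣ Y k - X k := by
      intro k
      simp only [hY, add_sub_cancel_left]
      exact dvd_mul_right _ _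
    obtain ⟨t, ht⟩ := hensel_lift A E p hp r e j X Y hFXdvd hDdvd hcj hYX
    set B' : Fin (n + 1) → ℤ := Function.update Y j (Y j + (p : ℤ) ^ (e + 1) * t) with hB'
    have hB'Xe : ∀ k, (p : ℤ) ^ (e + 1) ∣ B' k - X k := by
      intro k
      rcases eq_or_ne k j with rfl | hkj
      · rw [hB', Function.update_self]
        have hrw : Y k + (p : ℤ) ^ (e + 1) * t - X k
            = (Y k - X k) + (p : ℤ) ^ (e + 1) * t := by ring
        rw [hrw]
        exact dvd_add (hYX k) (dvd_mul_right _ _)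
      · rw [hB', Function.update_of_ne hkj]; exact hYX k
    have hunit : ∀ k, IsUnit ((B' k : ℤ) : ZMod (p ^ r)) := by
      intro k
      obtain ⟨w, hw⟩ := (dvd_pow_self ((p : ℤ)) (by omega : e + 1 ≠ 0)).trans (hB'Xe k)
      have hBk : ((B' k : ℤ) : ZMod (p ^ r))
          = ((X k : ℤ) : ZMod (p ^ r)) + (p : ZMod (p ^ r)) * ((w : ℤ) : ZMod (p ^ r)) := by
        have hb : B' k = X k + (p : ℤ) * w := by linarith
        rw [hb]; push_cast; ring
      rw [hBk, hXc k]
      have hnil : IsNilpotent ((p : ZMod (p ^ r)) * ((w : ℤ) : ZMod (p ^ r))) := by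
        refine ⟨r, ?_⟩
        rw [mul_pow]
        have hp0 : (p : ZMod (p ^ r)) ^ r = 0 := by
          rw [← Nat.cast_pow, ZMod.natCast_self]
        rw [hp0, zero_mul]
      exact hnil.isUnit_add_left_of_commute (x k).isUnit (Commute.all _ _)
    refine ⟨⟨fun k => (hunit k).unit, ?_⟩, ?_⟩
    · have hsum : ∑ m : Mono d n, a m * ∏ i, (((hunit i).unit : ZMod (p ^ r))) ^ (m.1 i : ℕ)
          = ((intForm A E B' : ℤ) : ZMod (p ^ r)) := by
        have hbu : ∀ k, (((hunit k).unit : ZMod (p ^ r))) = ((B' k : ℤ) : ZMod (p ^ r)) :=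
          fun k => (hunit k).unit_spec
        rw [hFcast]
        simp only [hbu, hE]
      rw [hsum, ZMod.intCast_zmod_eq_zero_iff_dvd, hQcast]
      exact ht
    · intro i
      show (((hunit (j.succAbove i)).unit : ZMod (p ^ r))) = _
      rw [(hunit (j.succAbove i)).unit_spec]
      congr 1
      have hBY : B' (j.succAbove i) = Y (j.succAbove i) := by
        rw [hB']; exact Function.update_of_ne (Fin.succAbove_ne j i) _ _
      rw [hBY]
      simp only [hY]
      congr 1
      simp only [huZ]
      rw [Fin.insertNth_apply_succAbove]
  choose Φ hΦ using key
  have hinj : Function.Injective Φ := by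
    intro u1 u2 h12
    funext i
    rcases Nat.eq_zero_or_pos (r - e - 1) with hs | hs
    · have hone : p ^ (r - e - 1) = 1 := by rw [hs, pow_zero]
      have hv1 : (u1 i).val = 0 := by
        have := ZMod.val_lt (u1 i); omega
      have hv2 : (u2 i).val = 0 := by
        have := ZMod.val_lt (u2 i); omega
      have e1 : (((u1 i).val : ℕ) : ZMod (p ^ (r - e - 1))) = u1 i :=
        ZMod.natCast_rightInverse _
      have e2 : (((u2 i).val : ℕ) : ZMod (p ^ (r - e - 1))) = u2 i :=
        ZMod.natCast_rightInverse _
      rw [← e1, ← e2, hv1, hv2]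
    · have h1 := hΦ u1 i
      have h2 := hΦ u2 i
      rw [h12] at h1
      have heq := h1.symm.trans h2
      have hd : (((p : ℤ) ^ (e + 1) * (((u1 i).val : ℤ) - ((u2 i).val : ℤ)) : ℤ)
          : ZMod (p ^ r)) = 0 := by
        push_cast at heq ⊢
        linear_combination heq
      rw [ZMod.intCast_zmod_eq_zero_iff_dvd] at hd
      have hQr : ((p ^ r : ℕ) : ℤ) = (p : ℤ) ^ (e + 1) * (p : ℤ) ^ (r - e - 1) := by
        push_cast
        rw [← pow_add]
        congr 1
        omega
      rw [hQr] at hd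
      have hpne : ((p : ℤ)) ^ (e + 1) ≠ 0 :=
        pow_ne_zero _ (by exact_mod_cast hp.pos.ne')
      have hd2 : (p : ℤ) ^ (r - e - 1) ∣ ((u1 i).val : ℤ) - ((u2 i).val : ℤ) :=
        (mul_dvd_mul_iff_left hpne).mp hd
      have h0 : ((((u1 i).val : ℤ) - ((u2 i).val : ℤ) : ℤ) : ZMod (p ^ (r - e - 1))) = 0 := by
        rw [ZMod.intCast_zmod_eq_zero_iff_dvd]
        push_cast
        exact hd2
      push_cast at h0
      rw [ZMod.natCast_rightInverse (u1 i), ZMod.natCast_rightInverse (u2 i)] at h0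
      exact sub_eq_zero.mp h0
  have hle : (p ^ (r - e - 1)) ^ n ≤ Nat.card {b : Fin (n + 1) → (ZMod (p ^ r))ˣ //
      ∑ m : Mono d n, a m * ∏ i, ((b i : ZMod (p ^ r))) ^ (m.1 i : ℕ) = 0} := by
    calc (p ^ (r - e - 1)) ^ n = Nat.card (Fin n → ZMod (p ^ (r - e - 1))) := by
          simp [Nat.card_eq_fintype_card, ZMod.card]
      _ ≤ _ := Nat.card_le_card_of_injective Φ hinj
  -- final numeric estimate
  rw [sigma']
  have hφpos : (0 : ℝ) < (Nat.totient (p ^ r) : ℝ) := by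
    exact_mod_cast Nat.totient_pos.mpr (Nat.pos_of_ne_zero hQnz.out)
  have hφpow : (0 : ℝ) < ((Nat.totient (p ^ r) : ℝ)) ^ (n + 1) := pow_pos hφpos _
  have hppos : (0 : ℝ) < (p : ℝ) := by exact_mod_cast hp.pos
  have hkey : Nat.totient (p ^ r) ^ (n + 1)
      ≤ p ^ ((e + 1) * n) * (p ^ r * p ^ ((r - e - 1) * n)) := by
    have h1 : Nat.totient (p ^ r) ^ (n + 1) ≤ (p ^ r) ^ (n + 1) :=
      Nat.pow_le_pow_left (Nat.totient_le _) _
    have h2 : (p ^ r) ^ (n + 1) = p ^ (r * (n + 1)) := by rw [← pow_mul]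
    have h3 : r * n ≤ ((e + 1) + (r - e - 1)) * n :=
      Nat.mul_le_mul hr3 (le_refl n)
    have h4 : r * (n + 1) ≤ (e + 1) * n + (r + (r - e - 1) * n) := by
      calc r * (n + 1) = r * n + r := by ring
        _ ≤ ((e + 1) + (r - e - 1)) * n + r := Nat.add_le_add_right h3 r
        _ = (e + 1) * n + (r + (r - e - 1) * n) := by ring
    calc Nat.totient (p ^ r) ^ (n + 1) ≤ p ^ (r * (n + 1)) := by rw [← h2]; exact h1
      _ ≤ p ^ ((e + 1) * n + (r + (r - e - 1) * n)) := Nat.pow_le_pow_right hp.pos h4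
      _ = p ^ ((e + 1) * n) * (p ^ r * p ^ ((r - e - 1) * n)) := by
          rw [pow_add, pow_add]
  have hkR : ((Nat.totient (p ^ r) : ℝ)) ^ (n + 1)
      ≤ (p : ℝ) ^ ((e + 1) * n) * (((p ^ r : ℕ) : ℝ) * (p : ℝ) ^ ((r - e - 1) * n)) := by
    exact_mod_cast hkey
  have step1 : ((p : ℝ) ^ ((e + 1) * n))⁻¹
      ≤ (((p ^ r : ℕ) : ℝ) / (Nat.totient (p ^ r) : ℝ) ^ (n + 1))
        * (p : ℝ) ^ ((r - e - 1) * n) := by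
    rw [div_mul_eq_mul_div, le_div_iff₀ hφpow, inv_mul_le_iff₀ (pow_pos hppos _)]
    exact hkR
  have hNl : ((p : ℝ)) ^ ((r - e - 1) * n) ≤ ((Nat.card {b : Fin (n + 1) → (ZMod (p ^ r))ˣ //
      ∑ m : Mono d n, a m * ∏ i, ((b i : ZMod (p ^ r))) ^ (m.1 i : ℕ) = 0} : ℕ) : ℝ) := by
    have h7 := hle
    rw [← pow_mul] at h7
    exact_mod_cast h7
  have step2 : (((p ^ r : ℕ) : ℝ) / (Nat.totient (p ^ r) : ℝ) ^ (n + 1))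
        * (p : ℝ) ^ ((r - e - 1) * n)
      ≤ (((p ^ r : ℕ) : ℝ) / (Nat.totient (p ^ r) : ℝ) ^ (n + 1))
        * ((Nat.card {b : Fin (n + 1) → (ZMod (p ^ r))ˣ //
          ∑ m : Mono d n, a m * ∏ i, ((b i : ZMod (p ^ r))) ^ (m.1 i : ℕ) = 0} : ℕ) : ℝ) := by
    refine mul_le_mul_of_nonneg_left hNl ?_
    positivity
  have hzpow : (p : ℝ) ^ (-(((e + 1) * n : ℕ) : ℤ)) = ((p : ℝ) ^ ((e + 1) * n))⁻¹ := by
    rw [zpow_neg, zpow_natCast]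
  rw [hzpow]
  exact le_trans (le_trans step1 step2) (le_of_eq rfl)
end

section
/- Let d ≥ 2, n ≥ 3, and N = binomial(n+d,d). The set 𝒰 of integer coefficient vectors a ∈ ℤ^N with ‖a‖ ≤ A such that the form f_a has a zero on the unit sphere S^n with all coordinates positive, but some c within Euclidean distance 1 of a has no such zero, satisfies #𝒰 ≪ A^{N−1}. -/
open scoped RealInnerProductSpace

/-- The degree-`d` form with real coefficient vector `a`, evaluated at `x ∈ ℝ^{n+1}`. -/
def formR (d n : ℕ) (a : Mono d n → ℝ) (x : Fin (n + 1) → ℝ) : ℝ :=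
  ∑ m : Mono d n, a m * ∏ i, x i ^ (m.1 i : ℕ)

namespace BCC

set_option linter.unusedSectionVars false

/-! ### Generic counting machinery in Euclidean space -/

section Euc

variable {ι : Type*} [Fintype ι] [DecidableEq ι] [Nonempty ι]

def toE (a : ι → ℤ) : EuclideanSpace ℝ ι := WithLp.toLp 2 (fun i => (a i : ℝ))

def ofFun (f : ι → ℝ) : EuclideanSpace ℝ ι := WithLp.toLp 2 f

lemma sub_apply (u v : EuclideanSpace ℝ ι) (i : ι) : (u - v) i = u i - v i := rfl

lemma coord_abs_le_norm (v : EuclideanSpace ℝ ι) (j : ι) : |v j| ≤ ‖v‖ := by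
  rw [EuclideanSpace.norm_eq, ← Real.sqrt_sq_eq_abs]
  apply Real.sqrt_le_sqrt
  have h := Finset.single_le_sum (f := fun i => ‖v i‖ ^ 2) (fun i _ => by positivity)
    (Finset.mem_univ j)
  simpa [Real.norm_eq_abs, sq_abs] using h

def res (j : ι) (v : EuclideanSpace ℝ ι) : EuclideanSpace ℝ {i // i ≠ j} := WithLp.toLp 2 (fun i => v i.1)

lemma res_sub (j : ι) (u v : EuclideanSpace ℝ ι) : res j (u - v) = res j u - res j v := rfl

lemma norm_res_le (j : ι) (v : EuclideanSpace ℝ ι) : ‖res j v‖ ≤ ‖v‖ := by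
  rw [EuclideanSpace.norm_eq, EuclideanSpace.norm_eq]
  apply Real.sqrt_le_sqrt
  have h0 : ∑ i : {i // i ≠ j}, ‖res j v i‖ ^ 2
      = ∑ i : {i // i ≠ j}, ‖v i.1‖ ^ 2 := rfl
  have h : ∑ i : {i // i ≠ j}, ‖v i.1‖ ^ 2
      = ∑ i ∈ Finset.univ.erase j, ‖v i‖ ^ 2 :=
    (Finset.sum_subtype (p := fun i => i ≠ j) (Finset.univ.erase j)
      (fun x => by simp [Finset.mem_erase]) (fun i => ‖v i‖ ^ 2)).symm
  rw [h0, h]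
  exact Finset.sum_le_sum_of_subset_of_nonneg (Finset.erase_subset _ _)
    (fun i _ _ => by positivity)

lemma inner_split (j : ι) (u w : EuclideanSpace ℝ ι) :
    ⟪u, w⟫ = u j * w j + ⟪res j u, res j w⟫ := by
  simp only [PiLp.inner_apply, RCLike.inner_apply, conj_trivial]
  simp only [mul_comm (w.ofLp _) (u.ofLp _), mul_comm ((res j w).ofLp _) ((res j u).ofLp _)]
  rw [← Finset.add_sum_erase _ _ (Finset.mem_univ j)]
  congr 1
  have h0 : ∑ x : {i // i ≠ j}, res j u x * res j w x
      = ∑ x : {i // i ≠ j}, u x.1 * w x.1 := rfl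
  rw [h0]
  exact Finset.sum_subtype (p := fun i => i ≠ j) (Finset.univ.erase j)
    (fun x => by simp [Finset.mem_erase]) (fun i => u i * w i)

lemma support_coord {K : Set (EuclideanSpace ℝ ι)} {p u : EuclideanSpace ℝ ι} (hu : ‖u‖ = 1)
    (hsupp : ∀ y ∈ K, ⟪u, y - p⟫ ≤ 0) {q : EuclideanSpace ℝ ι} (hq : q ∈ K) (j : ι) :
    u j * (q j - p j) ≤ ‖res j (q - p)‖ := by
  have h0 := hsupp q hq
  rw [inner_split j] at h0
  have hcs : -⟪res j u, res j (q - p)⟫ ≤ ‖res j u‖ * ‖res j (q - p)‖ := by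
    have h := abs_real_inner_le_norm (res j u) (res j (q - p))
    rw [abs_le] at h
    linarith [h.1]
  have hres1 : ‖res j u‖ ≤ 1 := hu ▸ norm_res_le j u
  have hmul : ‖res j u‖ * ‖res j (q - p)‖ ≤ ‖res j (q - p)‖ := by
    nlinarith [norm_nonneg (res j (q - p))]
  have hq' : (q - p) j = q j - p j := rfl
  rw [hq'] at h0
  linarith

def Good (K : Set (EuclideanSpace ℝ ι)) (j : ι) (σ : ℝ) (a : ι → ℤ) : Prop :=
  ∃ p u : EuclideanSpace ℝ ι, p ∈ K ∧ ‖u‖ = 1 ∧ ‖toE a - p‖ ≤ 2 ∧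
    (∀ y ∈ K, ⟪u, y - p⟫ ≤ 0) ∧ 1 / Real.sqrt (Fintype.card ι) ≤ σ * u j

lemma aux_div {s T rt : ℝ} (hrt : 0 < rt) (hs : 1 / rt ≤ s) (h : s * T ≤ 4) : T ≤ 4 * rt := by
  rcases le_or_gt T 0 with h' | h'
  · nlinarith
  · have h1 : (1 / rt) * T ≤ s * T := mul_le_mul_of_nonneg_right hs h'.le
    have h2 : (1 / rt) * T ≤ 4 := le_trans h1 h
    calc T = rt * ((1 / rt) * T) := by field_simp
    _ ≤ rt * 4 := mul_le_mul_of_nonneg_left h2 hrt.le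
    _ = 4 * rt := by ring

lemma diff_bound {K : Set (EuclideanSpace ℝ ι)} {j : ι} {σ : ℝ} (hσ : σ = 1 ∨ σ = -1)
    {a a' : ι → ℤ} (ha : Good K j σ a) (ha' : Good K j σ a')
    (hres : ∀ i, i ≠ j → a i = a' i) :
    |(a j : ℝ) - (a' j : ℝ)| ≤ 4 + 4 * Real.sqrt (Fintype.card ι) := by
  obtain ⟨p, u, hpK, hu, hap, hsupp, hσu⟩ := ha
  obtain ⟨p', u', hpK', hu', hap', hsupp', hσu'⟩ := ha'
  set rt := Real.sqrt (Fintype.card ι) with hrt_def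
  have hcard : (0:ℝ) < Fintype.card ι := by exact_mod_cast Fintype.card_pos
  have hrt : 0 < rt := Real.sqrt_pos.2 hcard
  have hσ2 : σ * σ = 1 := by rcases hσ with h | h <;> rw [h] <;> norm_num
  have hres0 : res j (toE a - toE a') = 0 := by
    ext i
    have := hres i.1 i.2
    simp [res, toE, sub_apply, this]
  have hR : ‖res j (p' - p)‖ ≤ 4 := by
    have hdec : p' - p = (p' - toE a') + (toE a' - toE a) + (toE a - p) := by abel
    have h1 : res j (p' - p)
        = res j (p' - toE a') + res j (toE a' - toE a) + res j (toE a - p) := by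
      rw [hdec]; rfl
    have h2 : res j (toE a' - toE a) = 0 := by
      rw [show toE a' - toE a = -(toE a - toE a') by abel,
        show res j (-(toE a - toE a')) = - res j (toE a - toE a') from rfl, hres0]
      simp
    rw [h1, h2, add_zero]
    calc ‖res j (p' - toE a') + res j (toE a - p)‖
        ≤ ‖res j (p' - toE a')‖ + ‖res j (toE a - p)‖ := norm_add_le _ _
      _ ≤ ‖p' - toE a'‖ + ‖toE a - p‖ := add_le_add (norm_res_le _ _) (norm_res_le _ _)
      _ ≤ 2 + 2 := by
          rw [norm_sub_rev]
          exact add_le_add hap' hap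
      _ = 4 := by norm_num
  have hR' : ‖res j (p - p')‖ ≤ 4 := by
    rw [show p - p' = -(p' - p) by abel, show res j (-(p' - p)) = - res j (p' - p) from rfl,
      norm_neg]
    exact hR
  have h1 : u j * (p' j - p j) ≤ 4 := le_trans (support_coord hu hsupp hpK' j) hR
  have h2 : u' j * (p j - p' j) ≤ 4 := le_trans (support_coord hu' hsupp' hpK j) hR'
  set T := σ * (p' j - p j) with hT
  have hb1 : (σ * u j) * T ≤ 4 := by
    have : (σ * u j) * T = (σ * σ) * (u j * (p' j - p j)) := by ring
    rw [this, hσ2, one_mul]; exact h1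
  have hb2 : (σ * u' j) * (-T) ≤ 4 := by
    have : (σ * u' j) * (-T) = (σ * σ) * (u' j * (p j - p' j)) := by ring
    rw [this, hσ2, one_mul]; exact h2
  have hT1 : T ≤ 4 * rt := aux_div hrt hσu hb1
  have hT2 : -T ≤ 4 * rt := aux_div hrt hσu' hb2
  have habs : |p' j - p j| ≤ 4 * rt := by
    have hσabs : |σ| = 1 := by rcases hσ with h | h <;> rw [h] <;> norm_num
    have : |T| ≤ 4 * rt := abs_le.2 ⟨by linarith, hT1⟩
    rw [hT, abs_mul, hσabs, one_mul] at this
    exact this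
  have hc1 : |(a j : ℝ) - p j| ≤ 2 := by
    have := coord_abs_le_norm (toE a - p) j
    rw [sub_apply] at this
    exact le_trans this hap
  have hc2 : |(a' j : ℝ) - p' j| ≤ 2 := by
    have := coord_abs_le_norm (toE a' - p') j
    rw [sub_apply] at this
    exact le_trans this hap'
  calc |(a j : ℝ) - (a' j : ℝ)|
      = |((a j : ℝ) - p j) + (p j - p' j) + (p' j - (a' j : ℝ))| := by ring_nf
    _ ≤ |((a j : ℝ) - p j) + (p j - p' j)| + |p' j - (a' j : ℝ)| := abs_add_le _ _
    _ ≤ |(a j : ℝ) - p j| + |p j - p' j| + |p' j - (a' j : ℝ)| := by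
        linarith [abs_add_le ((a j : ℝ) - p j) (p j - p' j)]
    _ ≤ 2 + 4 * rt + 2 := by
        have e1 : |p j - p' j| = |p' j - p j| := abs_sub_comm _ _
        have e2 : |p' j - (a' j : ℝ)| = |(a' j : ℝ) - p' j| := abs_sub_comm _ _
        rw [e1, e2]
        linarith
    _ = 4 + 4 * rt := by ring

lemma sqrt_card_le : Real.sqrt (Fintype.card ι) ≤ (Fintype.card ι : ℝ) := by
  have h1 : (1:ℝ) ≤ (Fintype.card ι : ℝ) := by exact_mod_cast Fintype.card_pos
  nlinarith [Real.sq_sqrt (by positivity : (0:ℝ) ≤ (Fintype.card ι : ℝ)),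
    Real.sqrt_nonneg ((Fintype.card ι : ℝ))]

open Classical in
lemma card_piece (K : Set (EuclideanSpace ℝ ι)) (j : ι) {σ : ℝ} (hσ : σ = 1 ∨ σ = -1) (M : ℕ) :
    ((Fintype.piFinset fun _ : ι => Finset.Icc (-(M:ℤ)) (M:ℤ)).filter
      (fun a => Good K j σ a)).card
      ≤ (2 * (4 + 4 * Fintype.card ι) + 1) * (2 * M + 1) ^ (Fintype.card ι - 1) := by
  set N := Fintype.card ι with hN
  set D := 4 + 4 * N with hD
  set box := Fintype.piFinset fun _ : ι => Finset.Icc (-(M:ℤ)) (M:ℤ) with hbox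
  set s := box.filter (fun a => Good K j σ a) with hs
  set t := Fintype.piFinset fun _ : {i // i ≠ j} => Finset.Icc (-(M:ℤ)) (M:ℤ) with ht
  have hmaps : ∀ a ∈ s, (fun i : {i // i ≠ j} => a i.1) ∈ t := by
    intro a ha
    exact Fintype.mem_piFinset.2 fun i =>
      Fintype.mem_piFinset.1 (Finset.mem_filter.1 ha).1 i.1
  have hfib : ∀ b ∈ t,
      (s.filter fun a => (fun i : {i // i ≠ j} => a i.1) = b).card ≤ 2 * D + 1 := by
    intro b _
    set fib := s.filter fun a => (fun i : {i // i ≠ j} => a i.1) = b with hfib_def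
    rcases Finset.eq_empty_or_nonempty fib with he | ⟨a₀, ha₀⟩
    · simp [he]
    · have hG : ∀ a ∈ fib, Good K j σ a := fun a ha =>
        (Finset.mem_filter.1 (Finset.mem_filter.1 ha).1).2
      have hrest : ∀ a ∈ fib, ∀ i, i ≠ j → a i = a₀ i := by
        intro a ha i hi
        have h1 := (Finset.mem_filter.1 ha).2
        have h2 := (Finset.mem_filter.1 ha₀).2
        exact congrFun (h1.trans h2.symm) ⟨i, hi⟩
      have hcard : fib.card ≤ (Finset.Icc (a₀ j - D) (a₀ j + D)).card := by
        apply Finset.card_le_card_of_injOn (fun a => a j)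
        · intro a ha
          have hd := diff_bound hσ (hG a ha) (hG a₀ ha₀) (hrest a ha)
          have hsq : Real.sqrt N ≤ (N:ℝ) := sqrt_card_le
          have hreal : |(a j : ℝ) - (a₀ j : ℝ)| ≤ ((D:ℤ) : ℝ) := by
            push_cast [hD]
            push_cast at hd
            linarith
          have hz : |a j - a₀ j| ≤ (D:ℤ) := by
            have : |((a j - a₀ j : ℤ) : ℝ)| ≤ ((D:ℤ):ℝ) := by
              push_cast
              push_cast at hreal
              linarith [hreal]
            exact_mod_cast this
          simp only [Finset.mem_coe, Finset.mem_Icc]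
          rcases abs_le.1 hz with ⟨hl, hr⟩
          omega
        · intro a ha a' ha' hj
          funext i
          by_cases hi : i = j
          · rw [hi]; exact hj
          · rw [hrest a ha i hi, hrest a' ha' i hi]
      refine le_trans hcard ?_
      rw [Int.card_Icc]
      omega
  have hmain := Finset.card_le_mul_card_image_of_maps_to hmaps (2 * D + 1) hfib
  have htcard : t.card = (2 * M + 1) ^ (N - 1) := by
    rw [ht, Fintype.card_piFinset]
    rw [Finset.prod_const]
    have h1 : (Finset.Icc (-(M:ℤ)) (M:ℤ)).card = 2 * M + 1 := by
      rw [Int.card_Icc]; omega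
    rw [h1]
    congr 1
    have h2 : Fintype.card {i // i ≠ j} = N - 1 := by
      have := Fintype.card_subtype_compl (fun i : ι => i = j)
      simp only [Fintype.card_subtype_eq] at this
      exact this
    rw [← h2]
    simp [Finset.card_univ]
  rw [htcard] at hmain
  exact hmain

lemma support_point {F : Type*} [NormedAddCommGroup F] [InnerProductSpace ℝ F]
    [CompleteSpace F] {K : Set F} (hK : Convex ℝ K) (hcl : IsClosed K) (hne : K.Nonempty)
    {a c : F} (hint : a ∉ interior K) (hc : c ∈ K) (hdist : ‖a - c‖ ≤ 1) :
    ∃ p u : F, p ∈ K ∧ ‖u‖ = 1 ∧ ‖a - p‖ ≤ 2 ∧ ∀ y ∈ K, ⟪u, y - p⟫ ≤ 0 := by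
  obtain ⟨a', ha', z, hz, hsum⟩ :
      ∃ a', a' ∉ K ∧ ∃ z ∈ K, ‖a - a'‖ + ‖a' - z‖ ≤ 2 := by
    by_cases haK : a ∈ K
    · have hfr : a ∈ closure Kᶜ := by
        have : a ∈ frontier K := by
          rw [hcl.frontier_eq]
          exact ⟨haK, hint⟩
        rw [frontier_eq_closure_inter_closure] at this
        exact this.2
      obtain ⟨a', ha'K, ha'd⟩ := Metric.mem_closure_iff.1 hfr 1 one_pos
      exact ⟨a', ha'K, a, haK, by
        rw [dist_eq_norm] at ha'd
        have : ‖a' - a‖ = ‖a - a'‖ := norm_sub_rev _ _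
        linarith⟩
    · exact ⟨a, haK, c, hc, by simp only [sub_self, norm_zero, zero_add]; linarith⟩
  obtain ⟨p, hpK, hproj⟩ := exists_norm_eq_iInf_of_complete_convex hne hcl.isComplete hK a'
  have hsupp : ∀ w ∈ K, ⟪a' - p, w - p⟫ ≤ 0 :=
    (norm_eq_iInf_iff_real_inner_le_zero hK hpK).1 hproj
  have hle : ‖a' - p‖ ≤ ‖a' - z‖ := by
    rw [hproj]
    exact ciInf_le ⟨0, Set.forall_mem_range.2 fun _ => norm_nonneg _⟩ (⟨z, hz⟩ : K)
  have hap : ‖a - p‖ ≤ 2 := by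
    calc ‖a - p‖ ≤ ‖a - a'‖ + ‖a' - p‖ := norm_sub_le_norm_sub_add_norm_sub _ _ _
    _ ≤ ‖a - a'‖ + ‖a' - z‖ := by linarith
    _ ≤ 2 := hsum
  have hne' : a' - p ≠ 0 := sub_ne_zero.2 fun h => ha' (h ▸ hpK)
  have hnorm : (0:ℝ) < ‖a' - p‖ := norm_pos_iff.2 hne'
  refine ⟨p, ‖a' - p‖⁻¹ • (a' - p), hpK, ?_, hap, fun y hy => ?_⟩
  · rw [norm_smul, norm_inv, norm_norm, inv_mul_cancel₀ hnorm.ne']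
  · rw [real_inner_smul_left]
    exact mul_nonpos_of_nonneg_of_nonpos (inv_nonneg.2 hnorm.le) (hsupp y hy)

def sgn (b : Bool) : ℝ := if b then 1 else -1

lemma sgn_pm (b : Bool) : sgn b = 1 ∨ sgn b = -1 := by
  cases b <;> simp [sgn]

open Classical in
lemma count_near (K : Set (EuclideanSpace ℝ ι)) (hK : Convex ℝ K) (hcl : IsClosed K)
    (hne : K.Nonempty) (A : ℝ) (hA : 1 ≤ A) :
    (({a : ι → ℤ | ‖toE a‖ ≤ A ∧ toE a ∉ interior K ∧ ∃ c ∈ K, ‖toE a - c‖ ≤ 1}).ncard : ℝ)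
      ≤ (2 * Fintype.card ι) * (2 * (4 + 4 * Fintype.card ι) + 1)
        * (5 * A) ^ (Fintype.card ι - 1) := by
  set N := Fintype.card ι with hN
  set M := ⌈A⌉₊ with hM
  set box := Fintype.piFinset fun _ : ι => Finset.Icc (-(M:ℤ)) (M:ℤ) with hbox
  set T : Finset (ι → ℤ) := (Finset.univ : Finset (ι × Bool)).biUnion
    (fun js => box.filter (fun a => Good K js.1 (sgn js.2) a)) with hT
  have hsub : {a : ι → ℤ | ‖toE a‖ ≤ A ∧ toE a ∉ interior K ∧ ∃ c ∈ K, ‖toE a - c‖ ≤ 1}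
      ⊆ (T : Set (ι → ℤ)) := by
    intro a ⟨hnorm, hint, c, hcK, hdist⟩
    obtain ⟨p, u, hpK, hu, hap, hsupp⟩ := support_point hK hcl hne hint hcK hdist
    obtain ⟨j, -, hjmax⟩ := Finset.exists_max_image Finset.univ (fun i => |u i|)
      Finset.univ_nonempty
    have hNpos : (0:ℝ) < N := by exact_mod_cast Fintype.card_pos
    have hsum : ∑ i, |u i| ^ 2 = 1 := by
      have h := EuclideanSpace.norm_eq u
      rw [hu] at h
      have h2 : Real.sqrt (∑ i, ‖u i‖ ^ 2) = 1 := h.symm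
      have h3 : ∑ i, ‖u i‖ ^ 2 = 1 := Real.sqrt_eq_one.1 h2
      simpa [Real.norm_eq_abs] using h3
    have hbound : (1:ℝ) ≤ N * |u j| ^ 2 := by
      have hle : ∑ i, |u i| ^ 2 ≤ N * |u j| ^ 2 := by
        calc ∑ i, |u i| ^ 2 ≤ ∑ _i : ι, |u j| ^ 2 :=
          Finset.sum_le_sum fun i _ =>
            pow_le_pow_left₀ (abs_nonneg _) (hjmax i (Finset.mem_univ i)) 2
        _ = N * |u j| ^ 2 := by rw [Finset.sum_const, Finset.card_univ]; ring
      linarith [hsum ▸ hle]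
    have huj : 1 / Real.sqrt N ≤ |u j| := by
      have h1 : (1:ℝ) / N ≤ |u j| ^ 2 := by
        rw [div_le_iff₀ hNpos]; linarith
      have h2 : Real.sqrt (1 / N) ≤ |u j| := by
        rw [← Real.sqrt_sq_eq_abs]
        exact Real.sqrt_le_sqrt (by rwa [sq_abs] at h1)
      have h4 : 1 / Real.sqrt N = Real.sqrt (1 / N) := by
        rw [one_div, one_div, Real.sqrt_inv]
      rw [h4]
      exact h2
    set b : Bool := decide (0 ≤ u j) with hb
    have hσu : 1 / Real.sqrt N ≤ sgn b * u j := by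
      by_cases h : 0 ≤ u j
      · have : sgn b = 1 := by simp [sgn, hb, h]
        rw [this, one_mul]
        rwa [abs_of_nonneg h] at huj
      · have : sgn b = -1 := by simp [sgn, hb, h]
        rw [this]
        rw [abs_of_neg (lt_of_not_ge h)] at huj
        linarith
    have habox : a ∈ box := by
      refine Fintype.mem_piFinset.2 fun i => ?_
      have h1 : |(a i : ℝ)| ≤ A := le_trans (coord_abs_le_norm (toE a) i) hnorm
      have h2 : (A:ℝ) ≤ (M:ℝ) := Nat.le_ceil A
      have h3 : |(a i : ℝ)| ≤ ((M:ℤ):ℝ) := by push_cast; linarith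
      have h4 : |a i| ≤ (M:ℤ) := by
        exact_mod_cast (by rw [← Int.cast_abs] at h3; exact_mod_cast h3 :
          ((|a i| : ℤ):ℝ) ≤ ((M:ℤ):ℝ))
      rw [Finset.mem_Icc]
      rcases abs_le.1 h4 with ⟨hl, hr⟩
      exact ⟨hl, hr⟩
    refine Finset.mem_coe.2 (Finset.mem_biUnion.2 ⟨(j, b), Finset.mem_univ _, ?_⟩)
    exact Finset.mem_filter.2 ⟨habox, p, u, hpK, hu, hap, hsupp, hσu⟩
  have hfin : (T : Set (ι → ℤ)).Finite := T.finite_toSet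
  have hncard :
      ({a : ι → ℤ | ‖toE a‖ ≤ A ∧ toE a ∉ interior K ∧ ∃ c ∈ K, ‖toE a - c‖ ≤ 1}).ncard
      ≤ T.card := by
    rw [← Set.ncard_coe_finset]
    exact Set.ncard_le_ncard hsub hfin
  have hTcard : T.card ≤ (2 * N) * ((2 * (4 + 4 * N) + 1) * (2 * M + 1) ^ (N - 1)) := by
    calc T.card ≤ ∑ js : ι × Bool, (box.filter (fun a => Good K js.1 (sgn js.2) a)).card :=
        Finset.card_biUnion_le
    _ ≤ ∑ _js : ι × Bool, (2 * (4 + 4 * N) + 1) * (2 * M + 1) ^ (N - 1) :=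
        Finset.sum_le_sum fun js _ => card_piece K js.1 (sgn_pm js.2) M
    _ = (2 * N) * ((2 * (4 + 4 * N) + 1) * (2 * M + 1) ^ (N - 1)) := by
        rw [Finset.sum_const, Finset.card_univ, Fintype.card_prod, Fintype.card_bool]
        simp [mul_comm, mul_assoc, mul_left_comm]
        rfl
  have hMA : ((2 * M + 1 : ℕ) : ℝ) ≤ 5 * A := by
    have h1 : (M:ℝ) < A + 1 := Nat.ceil_lt_add_one (by linarith)
    push_cast
    linarith
  have hpow : ((2 * M + 1 : ℕ) : ℝ) ^ (N - 1) ≤ (5 * A) ^ (N - 1) :=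
    pow_le_pow_left₀ (by positivity) hMA _
  calc (({a : ι → ℤ | ‖toE a‖ ≤ A ∧ toE a ∉ interior K ∧ ∃ c ∈ K, ‖toE a - c‖ ≤ 1}).ncard : ℝ)
      ≤ (T.card : ℝ) := by exact_mod_cast hncard
    _ ≤ ((2 * N) * ((2 * (4 + 4 * N) + 1) * (2 * M + 1) ^ (N - 1)) : ℕ) := by
        exact_mod_cast hTcard
    _ ≤ (2 * N) * ((2 * (4 + 4 * N) + 1) * (5 * A) ^ (N - 1)) := by
        push_cast
        have hc1 : (0:ℝ) ≤ 2 * (N:ℝ) := by positivity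
        have hc2 : (0:ℝ) ≤ 2 * (4 + 4 * (N:ℝ)) + 1 := by positivity
        push_cast at hpow
        nlinarith [hpow, mul_nonneg hc1 hc2]
    _ = (2 * N) * (2 * (4 + 4 * N) + 1) * (5 * A) ^ (N - 1) := by ring

end Euc

variable {d n : ℕ}

instance : Nonempty (Mono d n) :=
  ⟨⟨fun i => if i = 0 then Fin.last d else 0, by
    rw [Finset.sum_eq_single 0] <;> simp +contextual [Fin.last]⟩⟩

abbrev E (d n : ℕ) := EuclideanSpace ℝ (Mono d n)

def mono (d n : ℕ) (x : Fin (n + 1) → ℝ) : E d n := WithLp.toLp 2 (fun m => ∏ i, x i ^ (m.1 i : ℕ))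

lemma formR_eq_inner (v : E d n) (x : Fin (n + 1) → ℝ) :
    formR d n v x = ⟪v, mono d n x⟫ := by
  simp [formR, mono, PiLp.inner_apply, RCLike.inner_apply, E]
  exact Finset.sum_congr rfl fun _ _ => mul_comm _ _

lemma formR_smul_right (c : Mono d n → ℝ) (x : Fin (n + 1) → ℝ) (r : ℝ) :
    formR d n c (fun i => r * x i) = r ^ d * formR d n c x := by
  unfold formR
  rw [Finset.mul_sum]
  refine Finset.sum_congr rfl fun m _ => ?_
  have h : ∏ i, (r * x i) ^ (m.1 i : ℕ) = r ^ d * ∏ i, x i ^ (m.1 i : ℕ) := by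
    conv_lhs => simp only [mul_pow]
    rw [Finset.prod_mul_distrib, Finset.prod_pow_eq_pow_sum, m.2]
  rw [h]; ring

lemma continuous_formR (c : Mono d n → ℝ) : Continuous (fun x => formR d n c x) := by
  unfold formR
  exact continuous_finset_sum _ fun m _ =>
    (continuous_const.mul (continuous_finset_prod _ fun i _ => (continuous_apply i).pow _))

/-- positive part of sphere -/
def P (n : ℕ) : Set (Fin (n + 1) → ℝ) := {x | (∑ i, x i ^ 2) = 1 ∧ ∀ i, 0 < x i}

/-- forms of constant sign `σ` on `P` -/
def U (d n : ℕ) (σ : ℝ) : Set (E d n) := {v | ∀ x ∈ P n, 0 < σ * formR d n v x}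

lemma convex_U (σ : ℝ) : Convex ℝ (U d n σ) := by
  intro b hb c hc s t hs ht hst x hx
  have hb' := hb x hx
  have hc' := hc x hx
  have hlin : formR d n (WithLp.ofLp (s • b + t • c)) x = s * formR d n b x + t * formR d n c x := by
    unfold formR
    rw [Finset.mul_sum, Finset.mul_sum, ← Finset.sum_add_distrib]
    refine Finset.sum_congr rfl fun m _ => ?_
    have h : (s • b + t • c) m = s * b m + t * c m := rfl
    rw [h]; ring
  rw [hlin]
  rcases eq_or_lt_of_le hs with h | h
  · have ht1 : t = 1 := by linarith
    rw [← h, ht1]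
    nlinarith
  · nlinarith [mul_pos h hb', mul_nonneg ht hc'.le]

lemma mono_pos {x : Fin (n + 1) → ℝ} (hx : ∀ i, 0 < x i) (m : Mono d n) :
    0 < mono d n x m := show 0 < ∏ i, x i ^ (m.1 i : ℕ) from Finset.prod_pos fun i _ => pow_pos (hx i) _

lemma formR_ones_pos {x : Fin (n + 1) → ℝ} (hx : ∀ i, 0 < x i) :
    0 < formR d n (fun _ => (1 : ℝ)) x := by
  rw [show formR d n (fun _ => (1:ℝ)) x = ⟪WithLp.toLp 2 (fun _ => (1:ℝ)), mono d n x⟫ from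
    formR_eq_inner (WithLp.toLp 2 (fun _ => (1:ℝ)) : E d n) x]
  simp only [PiLp.inner_apply, RCLike.inner_apply, conj_trivial]
  · exact Finset.sum_pos (fun m _ => by simpa using mono_pos hx m) Finset.univ_nonempty

lemma U_nonempty (σ : ℝ) (hσ : σ = 1 ∨ σ = -1) : (U d n σ).Nonempty := by
  refine ⟨WithLp.toLp 2 (σ • (fun _ => (1 : ℝ))), fun x hx => ?_⟩
  have hlin : formR d n (σ • fun _ => (1:ℝ)) x = σ * formR d n (fun _ => (1:ℝ)) x := by
    unfold formR
    rw [Finset.mul_sum]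
    exact Finset.sum_congr rfl fun m _ => by
      have : (σ • fun _ => (1:ℝ)) m = σ * 1 := rfl
      rw [this]; ring
  rw [hlin]
  have := formR_ones_pos (d := d) hx.2
  rcases hσ with h | h <;> rw [h] <;> nlinarith

/-- dichotomy: a form with no zero on `P` has constant sign -/
lemma dichotomy (c : Mono d n → ℝ)
    (h : ¬ ∃ x, x ∈ P n ∧ formR d n c x = 0) :
    (WithLp.toLp 2 c : E d n) ∈ U d n 1 ∨ (WithLp.toLp 2 c : E d n) ∈ U d n (-1) := by
  by_contra hcon
  push_neg at hcon
  obtain ⟨h1, h2⟩ := hcon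
  have h1' : ∃ y ∈ P n, formR d n c y ≤ 0 := by
    by_contra hh
    push_neg at hh
    exact h1 fun x hx => by rw [one_mul]; exact hh x hx
  have h2' : ∃ x ∈ P n, 0 ≤ formR d n c x := by
    by_contra hh
    push_neg at hh
    exact h2 fun x hx => by have := hh x hx; nlinarith
  obtain ⟨y, hy, hy2⟩ := h1'
  obtain ⟨x, hx, hx2⟩ := h2'
  set w : ℝ → Fin (n + 1) → ℝ := fun t i => (1 - t) * y i + t * x i with hw
  have hcont : ContinuousOn (fun t => formR d n c (w t)) (Set.Icc 0 1) :=
    ((continuous_formR c).comp (by fun_prop)).continuousOn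
  have h01 : (0:ℝ) ∈ Set.Icc (formR d n c (w 0)) (formR d n c (w 1)) := by
    constructor
    · simpa [hw] using hy2
    · simpa [hw] using hx2
  obtain ⟨t, ht, ht0⟩ := intermediate_value_Icc (by norm_num : (0:ℝ) ≤ 1) hcont h01
  -- w t has positive coordinates
  have hwpos : ∀ i, 0 < w t i := by
    intro i
    have h1 : min (y i) (x i) ≤ y i := min_le_left _ _
    have h2 : min (y i) (x i) ≤ x i := min_le_right _ _
    have h3 : 0 < min (y i) (x i) := lt_min (hy.2 i) (hx.2 i)
    have := ht.1; have := ht.2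
    simp only [hw]
    nlinarith
  -- normalize
  set r : ℝ := Real.sqrt (∑ i, w t i ^ 2) with hr
  have hsum : 0 < ∑ i, w t i ^ 2 :=
    Finset.sum_pos (fun i _ => pow_pos (hwpos i) _) Finset.univ_nonempty
  have hrpos : 0 < r := Real.sqrt_pos.2 hsum
  refine h ⟨fun i => r⁻¹ * w t i, ⟨?_, fun i => mul_pos (inv_pos.2 hrpos) (hwpos i)⟩, ?_⟩
  · have : ∑ i, (r⁻¹ * w t i) ^ 2 = r⁻¹ ^ 2 * ∑ i, w t i ^ 2 := by
      rw [Finset.mul_sum]; exact Finset.sum_congr rfl fun i _ => by ring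
    rw [this, hr, ← Real.sqrt_inv, Real.sq_sqrt (by positivity)]
    field_simp
  · rw [formR_smul_right]
    have ht0' : formR d n c (w t) = 0 := ht0
    rw [ht0']; ring


lemma zero_not_mem_interior {σ : ℝ} (hσ : σ = 1 ∨ σ = -1) (a : E d n) {x : Fin (n+1) → ℝ}
    (hx : x ∈ P n) (hzero : formR d n a x = 0) :
    a ∉ interior (closure (U d n σ)) := by
  intro hmem
  obtain ⟨ε, hε, hball⟩ := Metric.isOpen_iff.1 isOpen_interior a hmem
  set w : E d n := WithLp.toLp 2 (fun _ => (1:ℝ)) with hw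
  have hS : 0 < formR d n w x := formR_ones_pos hx.2
  set S := formR d n w x with hSdef
  have hσ2 : σ * σ = 1 := by rcases hσ with h | h <;> rw [h] <;> norm_num
  have hσabs : |σ| = 1 := by rcases hσ with h | h <;> rw [h] <;> norm_num
  have hwnorm : 0 < ‖w‖ := by
    rw [norm_pos_iff]
    intro h0
    obtain ⟨m₀⟩ := (inferInstance : Nonempty (Mono d n))
    have h1 : w m₀ = 0 := congrArg (fun v : E d n => v m₀) h0
    rw [hw] at h1
    norm_num at h1
  set δ := ε / (2 * ‖w‖) with hδdef
  have hδ : 0 < δ := by positivity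
  set b := a - (σ * δ) • w with hb
  have hbmem : b ∈ closure (U d n σ) := by
    apply interior_subset
    apply hball
    rw [Metric.mem_ball, dist_eq_norm, hb]
    have h1 : a - (σ * δ) • w - a = -((σ * δ) • w) := by abel
    rw [h1, norm_neg, norm_smul, Real.norm_eq_abs, abs_mul, hσabs, one_mul, abs_of_pos hδ]
    have h3 : δ * ‖w‖ < ε := by
      rw [hδdef, div_mul_eq_mul_div, div_lt_iff₀ (by positivity : (0:ℝ) < 2 * ‖w‖)]
      nlinarith
    exact h3
  set μ := mono d n x with hμ
  have hbx : formR d n b x = -(σ * δ) * S := by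
    rw [formR_eq_inner, hb, inner_sub_left, real_inner_smul_left, ← formR_eq_inner,
      ← formR_eq_inner, hzero, hSdef]
    ring
  have hεc : 0 < δ * S / (‖μ‖ + 1) := by positivity
  obtain ⟨c', hc'U, hdistc⟩ := Metric.mem_closure_iff.1 hbmem _ hεc
  have hc'x : 0 < σ * formR d n c' x := hc'U x hx
  have hsplit : formR d n c' x = formR d n b x + ⟪c' - b, μ⟫ := by
    have h1 : ⟪c', μ⟫ - ⟪b, μ⟫ = ⟪c' - b, μ⟫ := (inner_sub_left _ _ _).symm
    rw [formR_eq_inner, formR_eq_inner, ← hμ]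
    linarith
  have hcs : |⟪c' - b, μ⟫| ≤ ‖c' - b‖ * ‖μ‖ := abs_real_inner_le_norm _ _
  have hc'b : ‖c' - b‖ < δ * S / (‖μ‖ + 1) := by
    rwa [dist_comm, dist_eq_norm] at hdistc
  have hineq : ‖c' - b‖ * ‖μ‖ < δ * S := by
    have h1 : ‖c' - b‖ * ‖μ‖ ≤ ‖c' - b‖ * (‖μ‖ + 1) :=
      mul_le_mul_of_nonneg_left (by linarith) (norm_nonneg _)
    have h2 : ‖c' - b‖ * (‖μ‖ + 1) < (δ * S / (‖μ‖ + 1)) * (‖μ‖ + 1) :=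
      mul_lt_mul_of_pos_right hc'b (by positivity)
    have h3 : (δ * S / (‖μ‖ + 1)) * (‖μ‖ + 1) = δ * S := by
      field_simp
    linarith
  have hfinal : σ * formR d n c' x < 0 := by
    have h1 : σ * formR d n c' x = σ * formR d n b x + σ * ⟪c' - b, μ⟫ := by
      rw [hsplit]; ring
    have h2 : σ * formR d n b x = -(δ * S) := by
      rw [hbx]
      have : σ * (-(σ * δ) * S) = -(δ * S) * (σ * σ) := by ring
      rw [this, hσ2]; ring
    have h3 : σ * ⟪c' - b, μ⟫ ≤ |⟪c' - b, μ⟫| := by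
      calc σ * ⟪c' - b, μ⟫ ≤ |σ * ⟪c' - b, μ⟫| := le_abs_self _
      _ = |⟪c' - b, μ⟫| := by rw [abs_mul, hσabs, one_mul]
    linarith
  linarith

lemma card_mono_le (d n : ℕ) : Fintype.card (Mono d n) ≤ (n + d).choose d := by
  have hsym : Fintype.card (Sym (Fin (n + 1)) d) = (n + d).choose d := by
    rw [Sym.card_sym_eq_choose, Fintype.card_fin]
    congr 1
    omega
  rw [← hsym]
  have hcards : ∀ m : Mono d n,
      Multiset.card (∑ i, Multiset.replicate (m.1 i : ℕ) i) = d := by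
    intro m
    classical
    rw [show (Multiset.card (∑ i, Multiset.replicate (m.1 i : ℕ) i))
        = ∑ i, Multiset.card (Multiset.replicate (m.1 i : ℕ) i) from
      map_sum (Multiset.cardHom) _ _]
    simp only [Multiset.card_replicate]
    exact m.2
  set f : Mono d n → Sym (Fin (n + 1)) d :=
    fun m => ⟨∑ i, Multiset.replicate (m.1 i : ℕ) i, hcards m⟩ with hf
  apply Fintype.card_le_of_injective f
  intro m m' h
  have hms : (∑ i, Multiset.replicate (m.1 i : ℕ) i)
      = ∑ i, Multiset.replicate (m'.1 i : ℕ) i := congrArg Subtype.val h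
  have hcount : ∀ i₀ : Fin (n + 1), (m.1 i₀ : ℕ) = (m'.1 i₀ : ℕ) := by
    intro i₀
    have h1 := congrArg (Multiset.count i₀) hms
    rw [Multiset.count_sum', Multiset.count_sum'] at h1
    simpa [Multiset.count_replicate] using h1
  exact Subtype.ext (funext fun i => Fin.ext (hcount i))

end BCC


open BCC in
/-- Let `d ≥ 2`, `n ≥ 3`, `N = binomial(n+d,d)`. The number of integer coefficient vectors
`a` with `‖a‖ ≤ A` such that `f_a` has a zero on `S^n` with all coordinates positive, but
some `c` within distance `1` of `a` has no such zero, is `≪ A^{N−1}`. -/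
theorem boundary_coefficient_count (d n : ℕ) (hd : 2 ≤ d) (hn : 3 ≤ n) :
    ∃ C : ℝ, 0 < C ∧ ∀ A : ℝ, 1 ≤ A →
      (Set.ncard {a : Mono d n → ℤ |
          Real.sqrt (∑ m, ((a m : ℝ)) ^ 2) ≤ A ∧
          (∃ x : Fin (n + 1) → ℝ, (∑ i, x i ^ 2) = 1 ∧ (∀ i, 0 < x i) ∧
            formR d n (fun m => (a m : ℝ)) x = 0) ∧
          (∃ c : Mono d n → ℝ, Real.sqrt (∑ m, (c m - (a m : ℝ)) ^ 2) ≤ 1 ∧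
            ¬ ∃ x : Fin (n + 1) → ℝ, (∑ i, x i ^ 2) = 1 ∧ (∀ i, 0 < x i) ∧
              formR d n c x = 0)} : ℝ)
        ≤ C * A ^ ((n + d).choose d - 1) := by
  classical
  set N := Fintype.card (Mono d n) with hN
  have hcard : N ≤ (n + d).choose d := card_mono_le d n
  have hN1 : 1 ≤ N := Fintype.card_pos
  refine ⟨2 * ((2 * (N:ℝ)) * (2 * (4 + 4 * (N:ℝ)) + 1) * 5 ^ (N - 1)), by positivity,
    fun A hA => ?_⟩
  have hA0 : (0:ℝ) < A := lt_of_lt_of_le one_pos hA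
  set Bs : ℝ → Set (Mono d n → ℤ) := fun σ =>
    {a : Mono d n → ℤ | ‖toE a‖ ≤ A ∧ toE a ∉ interior (closure (U d n σ)) ∧
      ∃ c ∈ closure (U d n σ), ‖toE a - c‖ ≤ 1} with hBs
  have hsub : {a : Mono d n → ℤ |
      Real.sqrt (∑ m, ((a m : ℝ)) ^ 2) ≤ A ∧
      (∃ x : Fin (n + 1) → ℝ, (∑ i, x i ^ 2) = 1 ∧ (∀ i, 0 < x i) ∧
        formR d n (fun m => (a m : ℝ)) x = 0) ∧
      (∃ c : Mono d n → ℝ, Real.sqrt (∑ m, (c m - (a m : ℝ)) ^ 2) ≤ 1 ∧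
        ¬ ∃ x : Fin (n + 1) → ℝ, (∑ i, x i ^ 2) = 1 ∧ (∀ i, 0 < x i) ∧
          formR d n c x = 0)} ⊆ Bs 1 ∪ Bs (-1) := by
    rintro a ⟨h1, ⟨x, hx1, hx2, hx0⟩, ⟨c, hc1, hc2⟩⟩
    have hxP : x ∈ P n := ⟨hx1, hx2⟩
    have hnorm : ‖toE a‖ ≤ A := by
      rw [EuclideanSpace.norm_eq]
      have he : ∑ m, ‖toE a m‖ ^ 2 = ∑ m, ((a m : ℝ)) ^ 2 := by
        refine Finset.sum_congr rfl fun m _ => ?_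
        rw [Real.norm_eq_abs, sq_abs]
        rfl
      rw [he]; exact h1
    have hzero : formR d n (toE a) x = 0 := hx0
    have hdist' : ‖toE a - ofFun c‖ ≤ 1 := by
      rw [norm_sub_rev, EuclideanSpace.norm_eq]
      have he : ∑ m, ‖(ofFun c - toE a) m‖ ^ 2 = ∑ m, (c m - (a m : ℝ)) ^ 2 := by
        refine Finset.sum_congr rfl fun m _ => ?_
        rw [BCC.sub_apply, Real.norm_eq_abs, sq_abs]
        rfl
      rw [he]; exact hc1
    have hnozero : ¬ ∃ x, x ∈ P n ∧ formR d n c x = 0 := by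
      rintro ⟨x', hx', h0'⟩
      exact hc2 ⟨x', hx'.1, hx'.2, h0'⟩
    rcases dichotomy c hnozero with h | h
    · exact Or.inl ⟨hnorm, zero_not_mem_interior (Or.inl rfl) (toE a) hxP hzero,
        ofFun c, subset_closure h, hdist'⟩
    · exact Or.inr ⟨hnorm, zero_not_mem_interior (Or.inr rfl) (toE a) hxP hzero,
        ofFun c, subset_closure h, hdist'⟩
  have hfinbox : {a : Mono d n → ℤ | ∀ i, a i ∈ Set.Icc (-(⌈A⌉₊:ℤ)) (⌈A⌉₊:ℤ)}.Finite := by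
    refine Set.Finite.subset
      (Set.Finite.pi (fun i : Mono d n => Set.finite_Icc (-(⌈A⌉₊:ℤ)) (⌈A⌉₊:ℤ))) ?_
    intro a ha
    exact fun i _ => ha i
  have hBfin : ∀ σ : ℝ, (Bs σ).Finite := by
    intro σ
    apply hfinbox.subset
    rintro a ⟨ha1, -, -⟩ i
    have h1 : |(a i : ℝ)| ≤ A := le_trans (coord_abs_le_norm (toE a) i) ha1
    have h2 : (A:ℝ) ≤ (⌈A⌉₊:ℝ) := Nat.le_ceil A
    have h3 : |(a i : ℝ)| ≤ ((⌈A⌉₊:ℤ):ℝ) := by push_cast; linarith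
    have h4 : |a i| ≤ (⌈A⌉₊:ℤ) := by
      exact_mod_cast (by rw [← Int.cast_abs] at h3; exact h3 : ((|a i| : ℤ):ℝ) ≤ ((⌈A⌉₊:ℤ):ℝ))
    exact ⟨(abs_le.1 h4).1, (abs_le.1 h4).2⟩
  have hcount : ∀ σ : ℝ, σ = 1 ∨ σ = -1 → ((Bs σ).ncard : ℝ)
      ≤ (2 * (N:ℝ)) * (2 * (4 + 4 * (N:ℝ)) + 1) * (5 * A) ^ (N - 1) := by
    intro σ hσ
    have := count_near (closure (U d n σ)) ((convex_U σ).closure) isClosed_closure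
      ((U_nonempty σ hσ).closure) A hA
    exact_mod_cast this
  have hstep1 : (Set.ncard {a : Mono d n → ℤ |
      Real.sqrt (∑ m, ((a m : ℝ)) ^ 2) ≤ A ∧
      (∃ x : Fin (n + 1) → ℝ, (∑ i, x i ^ 2) = 1 ∧ (∀ i, 0 < x i) ∧
        formR d n (fun m => (a m : ℝ)) x = 0) ∧
      (∃ c : Mono d n → ℝ, Real.sqrt (∑ m, (c m - (a m : ℝ)) ^ 2) ≤ 1 ∧
        ¬ ∃ x : Fin (n + 1) → ℝ, (∑ i, x i ^ 2) = 1 ∧ (∀ i, 0 < x i) ∧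
          formR d n c x = 0)} : ℝ) ≤ ((Bs 1).ncard : ℝ) + ((Bs (-1)).ncard : ℝ) := by
    have hm := Set.ncard_le_ncard hsub ((hBfin 1).union (hBfin (-1)))
    have hu := Set.ncard_union_le (Bs 1) (Bs (-1))
    have := le_trans hm hu
    exact_mod_cast this
  have hpowN : (5 * A) ^ (N - 1) = 5 ^ (N - 1) * A ^ (N - 1) := mul_pow 5 A (N - 1)
  have hexp : A ^ (N - 1) ≤ A ^ ((n + d).choose d - 1) :=
    pow_le_pow_right₀ hA (by omega)
  calc (Set.ncard {a : Mono d n → ℤ |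
      Real.sqrt (∑ m, ((a m : ℝ)) ^ 2) ≤ A ∧
      (∃ x : Fin (n + 1) → ℝ, (∑ i, x i ^ 2) = 1 ∧ (∀ i, 0 < x i) ∧
        formR d n (fun m => (a m : ℝ)) x = 0) ∧
      (∃ c : Mono d n → ℝ, Real.sqrt (∑ m, (c m - (a m : ℝ)) ^ 2) ≤ 1 ∧
        ¬ ∃ x : Fin (n + 1) → ℝ, (∑ i, x i ^ 2) = 1 ∧ (∀ i, 0 < x i) ∧
          formR d n c x = 0)} : ℝ)
      ≤ ((Bs 1).ncard : ℝ) + ((Bs (-1)).ncard : ℝ) := hstep1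
    _ ≤ 2 * ((2 * (N:ℝ)) * (2 * (4 + 4 * (N:ℝ)) + 1) * (5 * A) ^ (N - 1)) := by
        have hc1 := hcount 1 (Or.inl rfl)
        have hc2 := hcount (-1) (Or.inr rfl)
        linarith
    _ = 2 * ((2 * (N:ℝ)) * (2 * (4 + 4 * (N:ℝ)) + 1) * 5 ^ (N - 1)) * A ^ (N - 1) := by
        rw [hpowN]; ring
    _ ≤ 2 * ((2 * (N:ℝ)) * (2 * (4 + 4 * (N:ℝ)) + 1) * 5 ^ (N - 1))
          * A ^ ((n + d).choose d - 1) := by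
        have hcnn : (0:ℝ) ≤ 2 * ((2 * (N:ℝ)) * (2 * (4 + 4 * (N:ℝ)) + 1) * 5 ^ (N - 1)) := by
          positivity
        exact mul_le_mul_of_nonneg_left hexp hcnn
end

section
/- Let d ≥ 2, n ≥ 3, N = binomial(n+d,d), and δ ≥ 0. Define ℬ_{N,δ} as the set of a in the closed unit ball of ℝ^N such that f_a has a zero x ∈ S^n with all coordinates ≥ 0, but no zero x ∈ S^n with all coordinates > δ. Then vol(ℬ_{N,δ}) ≪ δ, with implied constant depending only on d and n. In particular, ℬ_{N,0} has Lebesgue measure zero. -/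
open MeasureTheory Set Finset

namespace BSV

variable (d n : ℕ)

def Kset : Set (Fin (n + 1) → ℝ) := {x | (∑ i, x i ^ 2) = 1 ∧ ∀ i, 0 ≤ x i}

def Rset (δ : ℝ) : Set (Fin (n + 1) → ℝ) := {x | (∑ i, x i ^ 2) = 1 ∧ ∀ i, δ < x i}

def pureMono (i : Fin (n + 1)) : Mono d n :=
  ⟨fun j => if j = i then ⟨d, Nat.lt_succ_self d⟩ else 0, by
    simp [apply_ite (Fin.val), Finset.sum_ite_eq']⟩

lemma pureMono_inj (hd : 0 < d) : Function.Injective (pureMono d n) := by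
  intro i j h
  by_contra hij
  have h1 : (((pureMono d n i).1 i : ℕ)) = d := by simp [pureMono]
  have h2 : (((pureMono d n j).1 i : ℕ)) = 0 := by
    simp only [pureMono]
    rw [if_neg hij]
    rfl
  rw [h] at h1
  omega

def vdir : Mono d n → ℝ := fun m => if m ∈ Finset.image (pureMono d n) Finset.univ then 1 else 0

lemma vdir_le_one : ∀ m, |vdir d n m| ≤ 1 := by
  intro m
  rw [vdir]
  split <;> simp

lemma formR_vdir (x : Fin (n + 1) → ℝ) (hd : 0 < d) :
    formR d n (vdir d n) x = ∑ i, x i ^ d := by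
  rw [formR]
  rw [← Finset.sum_filter_add_sum_filter_not Finset.univ
    (fun m => m ∈ Finset.image (pureMono d n) Finset.univ)]
  have h2 : ∀ m ∈ Finset.univ.filter
      (fun m => m ∉ Finset.image (pureMono d n) Finset.univ),
      vdir d n m * ∏ i, x i ^ (m.1 i : ℕ) = 0 := by
    intro m hm
    simp only [Finset.mem_filter] at hm
    simp [vdir, hm.2]
  rw [Finset.sum_congr rfl h2, Finset.sum_const_zero, add_zero]
  have h3 : Finset.univ.filter (fun m => m ∈ Finset.image (pureMono d n) Finset.univ)
      = Finset.image (pureMono d n) Finset.univ := by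
    ext m; simp
  rw [h3, Finset.sum_image (fun i _ j _ h => pureMono_inj d n hd h)]
  refine Finset.sum_congr rfl fun i _ => ?_
  have : vdir d n (pureMono d n i) = 1 := by
    simp only [vdir, if_pos (Finset.mem_image_of_mem _ (Finset.mem_univ i))]
  rw [this, one_mul]
  rw [show (pureMono d n i).1 = fun j => if j = i then ⟨d, Nat.lt_succ_self d⟩ else 0 from rfl]
  simp [apply_ite (Fin.val), Finset.prod_ite_eq']

lemma formR_add_smul (a b : Mono d n → ℝ) (s : ℝ) (x : Fin (n + 1) → ℝ) :
    formR d n (a + s • b) x = formR d n a x + s * formR d n b x := by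
  simp only [formR, Pi.add_apply, Pi.smul_apply, smul_eq_mul, add_mul, Finset.sum_add_distrib,
    Finset.mul_sum, mul_assoc]

lemma gLow {x : Fin (n + 1) → ℝ} (hx : x ∈ Kset n) :
    ((n + 1 : ℝ))⁻¹ ^ d ≤ ∑ i, x i ^ d := by
  obtain ⟨hq, hpos⟩ := hx
  have hn1 : (0:ℝ) < (n+1:ℝ) := by positivity
  have hex : ∃ j, ((n + 1 : ℝ))⁻¹ ≤ x j := by
    by_contra hc
    push_neg at hc
    have : (∑ i, x i ^ 2) < ∑ _i : Fin (n+1), ((n+1:ℝ))⁻¹ ^ 2 := by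
      apply Finset.sum_lt_sum_of_nonempty ⟨0, Finset.mem_univ 0⟩
      intro i _
      have := hc i
      have := hpos i
      nlinarith
    rw [hq, Finset.sum_const, Finset.card_univ, Fintype.card_fin] at this
    rw [nsmul_eq_mul] at this
    have hle : ((n:ℝ)+1) * ((n+1:ℝ))⁻¹ ^ 2 ≤ 1 := by
      rw [pow_two, ← mul_assoc, mul_inv_cancel₀ (ne_of_gt hn1), one_mul]
      rw [inv_le_one_iff₀]
      right; linarith
    push_cast at this
    linarith
  obtain ⟨j, hj⟩ := hex
  calc ((n + 1 : ℝ))⁻¹ ^ d ≤ x j ^ d := by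
        apply pow_le_pow_left₀ (by positivity) hj
    _ ≤ ∑ i, x i ^ d := by
        exact Finset.single_le_sum (fun i _ => pow_nonneg (hpos i) d) (Finset.mem_univ j)

lemma abs_pow_sub_pow {x y : ℝ} (hx : |x| ≤ 2) (hy : |y| ≤ 2) (k : ℕ) :
    |x ^ k - y ^ k| ≤ (k * 2 ^ k) * |x - y| := by
  induction k with
  | zero => simp
  | succ k ih =>
    have key : x ^ (k+1) - y ^ (k+1) = x * (x ^ k - y ^ k) + (x - y) * y ^ k := by ring
    rw [key]
    calc |x * (x ^ k - y ^ k) + (x - y) * y ^ k|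
        ≤ |x * (x ^ k - y ^ k)| + |(x - y) * y ^ k| := abs_add_le _ _
      _ = |x| * |x ^ k - y ^ k| + |x - y| * |y ^ k| := by rw [abs_mul, abs_mul]
      _ ≤ 2 * ((k * 2 ^ k) * |x - y|) + |x - y| * 2 ^ k := by
          have h1 : |x| * |x ^ k - y ^ k| ≤ 2 * ((k * 2 ^ k) * |x - y|) := by
            apply mul_le_mul hx ih (abs_nonneg _) (by norm_num)
          have h2 : |y ^ k| ≤ 2 ^ k := by
            rw [abs_pow]; exact pow_le_pow_left₀ (abs_nonneg _) hy k
          have h3 : |x - y| * |y ^ k| ≤ |x - y| * 2 ^ k :=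
            mul_le_mul_of_nonneg_left h2 (abs_nonneg _)
          linarith
      _ ≤ ((k+1 : ℕ) * 2 ^ (k+1)) * |x - y| := by
          push_cast
          rw [pow_succ]
          nlinarith [mul_nonneg (pow_nonneg (show (0:ℝ) ≤ 2 by norm_num) k) (abs_nonneg (x - y))]

lemma abs_prod_sub_prod {ι : Type*} [DecidableEq ι] (u w : ι → ℝ) {M : ℝ} (hM : 1 ≤ M)
    (hu : ∀ i, |u i| ≤ M) (hw : ∀ i, |w i| ≤ M) (s : Finset ι) :
    |∏ i ∈ s, u i - ∏ i ∈ s, w i| ≤ M ^ s.card * ∑ i ∈ s, |u i - w i| := by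
  induction s using Finset.induction_on with
  | empty => simp
  | @insert a s ha ih =>
    rw [Finset.prod_insert ha, Finset.prod_insert ha, Finset.sum_insert ha,
      Finset.card_insert_of_notMem ha]
    have key : u a * ∏ i ∈ s, u i - w a * ∏ i ∈ s, w i
        = u a * (∏ i ∈ s, u i - ∏ i ∈ s, w i) + (u a - w a) * ∏ i ∈ s, w i := by ring
    rw [key]
    have hprodw : |∏ i ∈ s, w i| ≤ M ^ s.card := by
      rw [Finset.abs_prod]
      calc ∏ i ∈ s, |w i| ≤ ∏ i ∈ s, M :=
            Finset.prod_le_prod (fun i _ => abs_nonneg _) (fun i _ => hw i)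
        _ = M ^ s.card := by rw [Finset.prod_const]
    have hM0 : (0:ℝ) ≤ M := le_trans zero_le_one hM
    have hMp : M ^ s.card ≤ M ^ (s.card + 1) := by
      calc M ^ s.card = 1 * M ^ s.card := (one_mul _).symm
        _ ≤ M * M ^ s.card := by
            apply mul_le_mul_of_nonneg_right hM (pow_nonneg hM0 _)
        _ = M ^ (s.card + 1) := by rw [pow_succ]; ring
    have hsumnn : (0:ℝ) ≤ ∑ i ∈ s, |u i - w i| :=
      Finset.sum_nonneg fun i _ => abs_nonneg _
    calc |u a * (∏ i ∈ s, u i - ∏ i ∈ s, w i) + (u a - w a) * ∏ i ∈ s, w i|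
        ≤ |u a| * |∏ i ∈ s, u i - ∏ i ∈ s, w i| + |u a - w a| * |∏ i ∈ s, w i| := by
          calc _ ≤ |u a * (∏ i ∈ s, u i - ∏ i ∈ s, w i)| + |(u a - w a) * ∏ i ∈ s, w i| :=
                abs_add_le _ _
            _ = _ := by rw [abs_mul, abs_mul]
      _ ≤ M * (M ^ s.card * ∑ i ∈ s, |u i - w i|) + |u a - w a| * M ^ s.card := by
          have h1 := mul_le_mul (hu a) ih (abs_nonneg _) hM0
          have h2 := mul_le_mul_of_nonneg_left hprodw (abs_nonneg (u a - w a))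
          linarith
      _ ≤ M ^ (s.card + 1) * (|u a - w a| + ∑ i ∈ s, |u i - w i|) := by
          rw [← mul_assoc, ← pow_succ']
          have h3 : |u a - w a| * M ^ s.card ≤ M ^ (s.card + 1) * |u a - w a| := by
            rw [mul_comm]
            exact mul_le_mul_of_nonneg_right hMp (abs_nonneg _)
          nlinarith [abs_nonneg (u a - w a), pow_nonneg hM0 (s.card+1)]

def Lip : ℝ := (Fintype.card (Mono d n)) * 2 ^ (d * (n + 1)) * (d * 2 ^ d)

lemma lip_pos (hd : 0 < d) : 0 < Lip d n := by
  have hcard : 0 < Fintype.card (Mono d n) := by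
    apply Fintype.card_pos_iff.mpr
    constructor
    exact ⟨fun j => if j = 0 then ⟨d, Nat.lt_succ_self d⟩ else 0, by
      simp [apply_ite (Fin.val), Finset.sum_ite_eq']⟩
  rw [Lip]
  have h1 : (0:ℝ) < Fintype.card (Mono d n) := by exact_mod_cast hcard
  have hd' : (0:ℝ) < d := by exact_mod_cast hd
  positivity

lemma formR_lip {a : Mono d n → ℝ} (ha : (∑ m, a m ^ 2) ≤ 1) (hd : 0 < d)
    {x y : Fin (n + 1) → ℝ}
    (hx : ∀ i, |x i| ≤ 2) (hy : ∀ i, |y i| ≤ 2) :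
    |formR d n a x - formR d n a y| ≤ Lip d n * ∑ i, |x i - y i| := by
  have habs : ∀ m : Mono d n, |a m| ≤ 1 := by
    intro m
    rw [← sq_le_one_iff_abs_le_one]
    exact le_trans (Finset.single_le_sum (fun i _ => sq_nonneg (a i)) (Finset.mem_univ m)) ha
  have hediff : ∀ (m : Mono d n),
      |(∏ i, x i ^ (m.1 i : ℕ)) - ∏ i, y i ^ (m.1 i : ℕ)|
        ≤ 2 ^ (d * (n+1)) * ((d * 2 ^ d) * ∑ i, |x i - y i|) := by
    intro m
    have he : ∀ i, (m.1 i : ℕ) ≤ d := by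
      intro i
      conv_rhs => rw [← m.2]
      exact Finset.single_le_sum (f := fun i => ((m.1 i : ℕ))) (fun i _ => Nat.zero_le _)
        (Finset.mem_univ i)
    have hM : (1:ℝ) ≤ 2 ^ d := one_le_pow₀ (by norm_num)
    have key := abs_prod_sub_prod (fun i => x i ^ (m.1 i : ℕ)) (fun i => y i ^ (m.1 i : ℕ))
      hM (fun i => ?_) (fun i => ?_) Finset.univ
    · refine le_trans key ?_
      rw [Finset.card_univ, Fintype.card_fin]
      have h1 : (∑ i, |x i ^ (m.1 i : ℕ) - y i ^ (m.1 i : ℕ)|)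
          ≤ (d * 2 ^ d) * ∑ i, |x i - y i| := by
        rw [Finset.mul_sum]
        apply Finset.sum_le_sum
        intro i _
        refine le_trans (abs_pow_sub_pow (hx i) (hy i) _) ?_
        apply mul_le_mul_of_nonneg_right ?_ (abs_nonneg _)
        have h2 : ((m.1 i : ℕ) : ℝ) ≤ (d : ℝ) := by exact_mod_cast he i
        have h3 : (2:ℝ) ^ (m.1 i : ℕ) ≤ 2 ^ d := pow_le_pow_right₀ (by norm_num) (he i)
        have h4 : (0:ℝ) ≤ ((m.1 i : ℕ) : ℝ) := by positivity
        nlinarith [pow_nonneg (show (0:ℝ) ≤ 2 by norm_num) (m.1 i : ℕ)]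
      have h5 : ((2:ℝ) ^ d) ^ (n+1) = 2 ^ (d * (n+1)) := by rw [← pow_mul]
      rw [h5]
      exact mul_le_mul_of_nonneg_left h1 (by positivity)
    · rw [abs_pow]
      exact le_trans (pow_le_pow_left₀ (abs_nonneg _) (hx i) _)
        (pow_le_pow_right₀ (by norm_num) (he i))
    · rw [abs_pow]
      exact le_trans (pow_le_pow_left₀ (abs_nonneg _) (hy i) _)
        (pow_le_pow_right₀ (by norm_num) (he i))
  have key : formR d n a x - formR d n a y
      = ∑ m : Mono d n, a m * ((∏ i, x i ^ (m.1 i : ℕ)) - ∏ i, y i ^ (m.1 i : ℕ)) := by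
    rw [formR, formR, ← Finset.sum_sub_distrib]
    exact Finset.sum_congr rfl fun m _ => by ring
  rw [key]
  calc |∑ m : Mono d n, a m * ((∏ i, x i ^ (m.1 i : ℕ)) - ∏ i, y i ^ (m.1 i : ℕ))|
      ≤ ∑ m : Mono d n, |a m * ((∏ i, x i ^ (m.1 i : ℕ)) - ∏ i, y i ^ (m.1 i : ℕ))| :=
        Finset.abs_sum_le_sum_abs _ _
    _ ≤ ∑ _m : Mono d n, 2 ^ (d * (n+1)) * ((d * 2 ^ d) * ∑ i, |x i - y i|) := by
        apply Finset.sum_le_sum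
        intro m _
        rw [abs_mul]
        calc |a m| * |(∏ i, x i ^ (m.1 i : ℕ)) - ∏ i, y i ^ (m.1 i : ℕ)|
            ≤ 1 * (2 ^ (d * (n+1)) * ((d * 2 ^ d) * ∑ i, |x i - y i|)) :=
              mul_le_mul (habs m) (hediff m) (abs_nonneg _) zero_le_one
          _ = _ := one_mul _
    _ = Lip d n * ∑ i, |x i - y i| := by
        rw [Finset.sum_const, Finset.card_univ, nsmul_eq_mul, Lip]
        ring

set_option maxHeartbeats 1000000 in
lemma perturb {δ : ℝ} (hδ : 0 < δ) (hδ' : δ ≤ ((8 : ℝ) * (n + 1))⁻¹) {x : Fin (n + 1) → ℝ}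
    (hx : x ∈ Kset n) :
    ∃ x' ∈ Rset n δ, (∀ i, |x' i| ≤ 2) ∧ (∑ i, |x i - x' i|) ≤ 6 * (n + 1) ^ 2 * δ := by
  obtain ⟨hq, hpos⟩ := hx
  have hn1 : (0:ℝ) < (n+1:ℝ) := by positivity
  have hδ1 : δ ≤ 1 := by
    refine le_trans hδ' ?_
    rw [inv_le_one_iff₀]; right; nlinarith
  have hδn : 4 * δ * (n+1:ℝ) ≤ 1/2 := by
    have h0 : (0:ℝ) < 8 * (n+1:ℝ) := by positivity
    have := mul_le_mul_of_nonneg_right hδ' (le_of_lt h0)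
    rw [inv_mul_cancel₀ (ne_of_gt h0)] at this
    nlinarith
  have hxle : ∀ i, x i ≤ 1 := by
    intro i
    nlinarith [Finset.single_le_sum (f := fun i => x i ^ 2) (fun i _ => sq_nonneg _)
      (Finset.mem_univ i), hpos i]
  set w : Fin (n+1) → ℝ := fun i => x i + 2 * δ with hw
  have hqw : (∑ i, w i ^ 2) = 1 + (4 * δ) * (∑ i, x i) + 4 * δ^2 * (n+1) := by
    simp only [hw]
    have : ∀ i, (x i + 2*δ)^2 = x i ^2 + (4*δ) * x i + 4 * δ^2 := fun i => by ring
    rw [Finset.sum_congr rfl fun i _ => this i]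
    rw [Finset.sum_add_distrib, Finset.sum_add_distrib, ← Finset.mul_sum, hq,
      Finset.sum_const, Finset.card_univ, Fintype.card_fin, nsmul_eq_mul]
    push_cast; ring
  have hsumx : (0:ℝ) ≤ ∑ i, x i := Finset.sum_nonneg fun i _ => hpos i
  have hsumx' : (∑ i, x i) ≤ (n+1:ℝ) := by
    calc (∑ i, x i) ≤ ∑ _i : Fin (n+1), (1:ℝ) := Finset.sum_le_sum fun i _ => hxle i
      _ = (n+1:ℝ) := by
          rw [Finset.sum_const, Finset.card_univ, Fintype.card_fin, nsmul_eq_mul]; push_cast; ring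
  have hqw1 : 1 ≤ ∑ i, w i ^ 2 := by rw [hqw]; nlinarith
  have hqw2 : (∑ i, w i ^ 2) ≤ (1 + 4 * δ * (n+1))^2 := by
    rw [hqw]
    have hc : (n+1:ℝ) ≤ (n+1:ℝ)^2 := by nlinarith
    nlinarith [mul_le_mul_of_nonneg_left hsumx' (by positivity : (0:ℝ) ≤ 4*δ),
      mul_le_mul_of_nonneg_left hc (by positivity : (0:ℝ) ≤ 4*δ^2)]
  set r : ℝ := Real.sqrt (∑ i, w i ^ 2) with hr
  have hr1 : 1 ≤ r := by
    rw [hr, show (1:ℝ) = Real.sqrt 1 by simp]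
    exact Real.sqrt_le_sqrt hqw1
  have hr0 : 0 < r := lt_of_lt_of_le one_pos hr1
  have hr2 : r ≤ 1 + 4 * δ * (n+1) := by
    rw [hr]
    calc Real.sqrt (∑ i, w i ^ 2) ≤ Real.sqrt ((1 + 4 * δ * (n+1))^2) := Real.sqrt_le_sqrt hqw2
      _ = 1 + 4 * δ * (n+1) := Real.sqrt_sq (by positivity)
  have hrsq : r ^ 2 = ∑ i, w i ^ 2 := Real.sq_sqrt (le_trans zero_le_one hqw1)
  refine ⟨fun i => w i / r, ⟨?_, ?_⟩, ?_, ?_⟩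
  · rw [show (∑ i, (w i / r)^2) = (∑ i, w i ^ 2) / r^2 by
      rw [Finset.sum_div]; exact Finset.sum_congr rfl fun i _ => by ring]
    rw [hrsq, div_self (by positivity)]
  · intro i
    have hwi : 2 * δ ≤ w i := by simp only [hw]; linarith [hpos i]
    rw [lt_div_iff₀ hr0]
    calc δ * r ≤ δ * (1 + 4 * δ * (n+1)) := by
          apply mul_le_mul_of_nonneg_left hr2 (le_of_lt hδ)
      _ < 2 * δ := by nlinarith
      _ ≤ w i := hwi
  · intro i
    have hwi0 : 0 ≤ w i := by simp only [hw]; linarith [hpos i]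
    rw [abs_of_nonneg (by positivity)]
    rw [div_le_iff₀ hr0]
    simp only [hw]
    nlinarith [hxle i]
  · have hbound : ∀ i, |x i - w i / r| ≤ 6 * (n+1) * δ := by
      intro i
      have : x i - w i / r = ((r - 1) * x i - 2 * δ) / r := by
        simp only [hw]
        field_simp
        ring
      rw [this, abs_div, abs_of_pos hr0, div_le_iff₀ hr0]
      have h1 : |(r - 1) * x i - 2 * δ| ≤ (r - 1) * x i + 2 * δ := by
        rw [abs_le]
        constructor
        · nlinarith [mul_nonneg (sub_nonneg.mpr hr1) (hpos i)]
        · nlinarith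
      have h2 : (r - 1) * x i ≤ 4 * δ * (n+1) := by
        have := mul_le_mul_of_nonneg_left (hxle i) (sub_nonneg.mpr hr1)
        rw [mul_one] at this
        linarith
      have h3 : (0:ℝ) ≤ 6*(n+1:ℝ)*δ*(r-1) :=
        mul_nonneg (by positivity) (sub_nonneg.mpr hr1)
      have h4 : (0:ℝ) ≤ δ * n := mul_nonneg hδ.le (Nat.cast_nonneg n)
      nlinarith [h1, h2, h3, h4]
    calc (∑ i, |x i - w i / r|) ≤ ∑ _i : Fin (n+1), 6 * (n+1:ℝ) * δ :=
          Finset.sum_le_sum fun i _ => hbound i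
      _ = 6 * (n+1:ℝ)^2 * δ := by
          rw [Finset.sum_const, Finset.card_univ, Fintype.card_fin, nsmul_eq_mul]
          push_cast; ring

lemma continuous_sumsq : Continuous fun x : Fin (n+1) → ℝ => ∑ i, x i ^ 2 :=
  continuous_finset_sum _ fun i _ => (continuous_apply i).pow 2

lemma Rset_preconnected {δ : ℝ} (hδ : 0 < δ) : IsPreconnected (Rset n δ) := by
  set R' : Set (Fin (n+1) → ℝ) := {w | (∀ i, δ < w i) ∧ (∑ i, w i ^ 2) ≤ 1} with hR'
  have hconv : Convex ℝ R' := by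
    intro p hp q hq s t hs ht hst
    constructor
    · intro i
      simp only [Pi.add_apply, Pi.smul_apply, smul_eq_mul]
      rcases eq_or_lt_of_le hs with hs0 | hs0
      · have ht1 : t = 1 := by linarith
        rw [← hs0, ht1]
        simpa using hq.1 i
      · have h1 : s * δ < s * p i := mul_lt_mul_of_pos_left (hp.1 i) hs0
        have h2 : t * δ ≤ t * q i := mul_le_mul_of_nonneg_left (hq.1 i).le ht
        nlinarith
    · simp only [Pi.add_apply, Pi.smul_apply, smul_eq_mul]
      have key : (∑ i, (s * p i + t * q i)^2) ≤ s * (∑ i, p i ^2) + t * (∑ i, q i ^2) := by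
        rw [Finset.mul_sum, Finset.mul_sum, ← Finset.sum_add_distrib]
        apply Finset.sum_le_sum
        intro i _
        nlinarith [mul_nonneg (mul_nonneg hs ht) (sq_nonneg (p i - q i))]
      calc (∑ i, (s * p i + t * q i)^2) ≤ s * (∑ i, p i ^2) + t * (∑ i, q i ^2) := key
        _ ≤ s * 1 + t * 1 := by
            apply add_le_add (mul_le_mul_of_nonneg_left hp.2 hs)
              (mul_le_mul_of_nonneg_left hq.2 ht)
        _ = 1 := by rw [mul_one, mul_one, hst]
  have hmap : ((fun w => (Real.sqrt (∑ i, w i ^ 2))⁻¹ • w) '' R') = Rset n δ := by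
    apply Set.Subset.antisymm
    · rintro _ ⟨w, ⟨hw1, hw2⟩, rfl⟩
      have hq0 : 0 < ∑ i, w i ^ 2 := by
        have h0 : (0:ℝ) < w 0 := lt_trans hδ (hw1 0)
        have h1 : w 0 ^ 2 ≤ ∑ i, w i ^ 2 := by
          simpa using Finset.single_le_sum (f := fun i => w i ^ 2)
            (fun i _ => sq_nonneg _) (Finset.mem_univ 0)
        nlinarith
      have hr0 : 0 < Real.sqrt (∑ i, w i ^ 2) := Real.sqrt_pos.mpr hq0
      have hr1 : Real.sqrt (∑ i, w i ^ 2) ≤ 1 := by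
        rw [show (1:ℝ) = Real.sqrt 1 by simp]
        exact Real.sqrt_le_sqrt hw2
      constructor
      · simp only [Pi.smul_apply, smul_eq_mul]
        have : (∑ i, ((Real.sqrt (∑ j, w j ^ 2))⁻¹ * w i) ^ 2)
            = (Real.sqrt (∑ j, w j ^ 2))⁻¹ ^ 2 * ∑ i, w i ^ 2 := by
          rw [Finset.mul_sum]
          exact Finset.sum_congr rfl fun i _ => by ring
        rw [this, inv_pow, Real.sq_sqrt hq0.le, inv_mul_cancel₀ (ne_of_gt hq0)]
      · intro i
        simp only [Pi.smul_apply, smul_eq_mul]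
        have hwi : δ < w i := hw1 i
        calc δ < w i := hwi
          _ = 1 * w i := (one_mul _).symm
          _ ≤ (Real.sqrt (∑ j, w j ^ 2))⁻¹ * w i := by
              apply mul_le_mul_of_nonneg_right ?_ (le_of_lt (lt_trans hδ hwi))
              rw [le_inv_comm₀ one_pos hr0]
              simpa using hr1
    · intro x hx
      refine ⟨x, ⟨hx.2, le_of_eq hx.1⟩, ?_⟩
      show (Real.sqrt (∑ i, x i ^ 2))⁻¹ • x = x
      rw [hx.1]
      simp
  rw [← hmap]
  apply (hconv.isPreconnected).image
  apply ContinuousOn.fun_smul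
  · apply ContinuousOn.inv₀
    · exact ((continuous_sumsq n).sqrt).continuousOn
    · intro w hw
      have h0 : (0:ℝ) < w 0 := lt_trans hδ (hw.1 0)
      have h1 : w 0 ^ 2 ≤ ∑ i, w i ^ 2 := by
        simpa using Finset.single_le_sum (f := fun i => w i ^ 2)
          (fun i _ => sq_nonneg _) (Finset.mem_univ 0)
      have : (0:ℝ) < ∑ i, w i ^ 2 := by nlinarith
      exact ne_of_gt (Real.sqrt_pos.mpr this)
  · exact continuous_id.continuousOn

lemma Kset_compact : IsCompact (Kset n) := by
  have hsub : Kset n ⊆ Metric.closedBall 0 1 := by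
    intro x hx
    rw [Metric.mem_closedBall, dist_zero_right]
    rw [pi_norm_le_iff_of_nonneg zero_le_one]
    intro i
    rw [Real.norm_eq_abs, abs_le]
    have h1 : x i ^ 2 ≤ ∑ j, x j ^ 2 := by
      simpa using Finset.single_le_sum (f := fun j => x j ^ 2) (fun j _ => sq_nonneg _)
        (Finset.mem_univ i)
    rw [hx.1] at h1
    constructor
    · nlinarith [sq_nonneg (x i + 1)]
    · nlinarith [sq_nonneg (x i - 1)]
  have hclosed : IsClosed (Kset n) := by
    have : Kset n = {x | (∑ i, x i ^ 2) = 1} ∩ ⋂ i, {x | 0 ≤ x i} := by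
      ext x; simp [Kset]
    rw [this]
    apply IsClosed.inter
    · exact isClosed_eq (continuous_sumsq n) continuous_const
    · exact isClosed_iInter fun i => isClosed_le continuous_const (continuous_apply i)
  exact (isCompact_closedBall 0 1).of_isClosed_subset hclosed hsub

lemma continuous_formR_a (x : Fin (n + 1) → ℝ) :
    Continuous fun a : Mono d n → ℝ => formR d n a x :=
  continuous_finset_sum _ fun m _ => (continuous_apply m).mul continuous_const

lemma continuous_formR_x (a : Mono d n → ℝ) : Continuous fun x => formR d n a x :=
  continuous_finset_sum _ fun m _ => continuous_const.mul
    (continuous_finset_prod _ fun i _ => (continuous_apply i).pow _)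

lemma closed_exists (c : ℝ) :
    IsClosed {a : Mono d n → ℝ | ∃ y ∈ Kset n, c * formR d n a y ≤ 0} := by
  have hcs : CompactSpace (Kset n) := isCompact_iff_compactSpace.mp (Kset_compact n)
  have hF : Continuous fun p : (Kset n) × (Mono d n → ℝ) => c * formR d n p.2 p.1 := by
    apply continuous_const.mul
    apply continuous_finset_sum
    intro m _
    apply ((continuous_apply m).comp continuous_snd).mul
    apply continuous_finset_prod
    intro i _
    exact (((continuous_apply i).comp continuous_subtype_val).comp continuous_fst).pow _
  have hC : IsClosed {p : (Kset n) × (Mono d n → ℝ) | c * formR d n p.2 p.1 ≤ 0} :=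
    isClosed_le hF continuous_const
  have key := isClosedMap_snd_of_compactSpace _ hC
  convert key using 1
  ext a
  constructor
  · rintro ⟨y, hy, hle⟩
    exact ⟨(⟨y, hy⟩, a), hle, rfl⟩
  · rintro ⟨⟨y, a'⟩, hle, rfl⟩
    exact ⟨y.1, y.2, hle⟩

def Tp (δ : ℝ) : Set (Mono d n → ℝ) :=
  {a | (∑ m, a m ^ 2) ≤ 1 ∧ (∃ y ∈ Kset n, formR d n a y ≤ 0) ∧
    ∀ x ∈ Rset n δ, 0 ≤ formR d n a x}

def Tm (δ : ℝ) : Set (Mono d n → ℝ) :=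
  {a | (∑ m, a m ^ 2) ≤ 1 ∧ (∃ y ∈ Kset n, 0 ≤ formR d n a y) ∧
    ∀ x ∈ Rset n δ, formR d n a x ≤ 0}

lemma ball_closed : IsClosed {a : Mono d n → ℝ | (∑ m, a m ^ 2) ≤ 1} :=
  isClosed_le (continuous_finset_sum _ fun m _ => (continuous_apply m).pow 2) continuous_const

lemma forall_closed (δ : ℝ) : IsClosed {a : Mono d n → ℝ | ∀ x ∈ Rset n δ, 0 ≤ formR d n a x} := by
  have : {a : Mono d n → ℝ | ∀ x ∈ Rset n δ, 0 ≤ formR d n a x}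
      = ⋂ x ∈ Rset n δ, {a | 0 ≤ formR d n a x} := by
    ext a; simp
  rw [this]
  exact isClosed_biInter fun x _ => isClosed_le continuous_const (continuous_formR_a d n x)

lemma forall_closed' (δ : ℝ) : IsClosed {a : Mono d n → ℝ | ∀ x ∈ Rset n δ, formR d n a x ≤ 0} := by
  have : {a : Mono d n → ℝ | ∀ x ∈ Rset n δ, formR d n a x ≤ 0}
      = ⋂ x ∈ Rset n δ, {a | formR d n a x ≤ 0} := by
    ext a; simp
  rw [this]
  exact isClosed_biInter fun x _ => isClosed_le (continuous_formR_a d n x) continuous_const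

lemma Tp_closed (δ : ℝ) : IsClosed (Tp d n δ) := by
  have h2 : IsClosed {a : Mono d n → ℝ | ∃ y ∈ Kset n, formR d n a y ≤ 0} := by
    have := closed_exists d n 1
    simpa using this
  exact ((ball_closed d n).inter (h2.inter (forall_closed d n δ)) : _)

lemma Tm_closed (δ : ℝ) : IsClosed (Tm d n δ) := by
  have h2 : IsClosed {a : Mono d n → ℝ | ∃ y ∈ Kset n, 0 ≤ formR d n a y} := by
    have := closed_exists d n (-1)
    have heq : {a : Mono d n → ℝ | ∃ y ∈ Kset n, (-1) * formR d n a y ≤ 0}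
        = {a : Mono d n → ℝ | ∃ y ∈ Kset n, 0 ≤ formR d n a y} := by
      ext a
      constructor <;> rintro ⟨y, hy, h⟩ <;> exact ⟨y, hy, by linarith⟩
    rwa [heq] at this
  exact ((ball_closed d n).inter (h2.inter (forall_closed' d n δ)) : _)

noncomputable def cLow : ℝ := ((n + 1 : ℝ))⁻¹ ^ d

lemma cLow_pos : 0 < cLow d n := by
  have : (0:ℝ) < (n+1:ℝ) := by positivity
  rw [cLow]; positivity

noncomputable def C2 : ℝ := Lip d n * (6 * (n + 1) ^ 2) / cLow d n + 1

lemma C2_pos (hd : 0 < d) : 0 < C2 d n := by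
  rw [C2]
  have h1 := lip_pos d n hd
  have h2 := cLow_pos d n
  positivity

lemma Kset_le_two {x : Fin (n+1) → ℝ} (hx : x ∈ Kset n) : ∀ i, |x i| ≤ 2 := by
  intro i
  have h1 : x i ^ 2 ≤ ∑ j, x j ^ 2 := by
    simpa using Finset.single_le_sum (f := fun j => x j ^ 2) (fun j _ => sq_nonneg _)
      (Finset.mem_univ i)
  rw [hx.1] at h1
  rw [abs_le]
  constructor
  · nlinarith [sq_nonneg (x i + 1)]
  · nlinarith [sq_nonneg (x i - 1)]

lemma Rset_sub_Kset {δ : ℝ} (hδ : 0 < δ) : Rset n δ ⊆ Kset n := by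
  intro x hx
  exact ⟨hx.1, fun i => le_of_lt (lt_trans hδ (hx.2 i))⟩

lemma fiber_Tp {δ s : ℝ} (hδ : 0 < δ) (hδ' : δ ≤ ((8 : ℝ) * (n + 1))⁻¹) (hd : 0 < d)
    {a : Mono d n → ℝ} (ha : a ∈ Tp d n δ) (hb : a + s • vdir d n ∈ Tp d n δ) (hs : 0 < s) :
    s < C2 d n * δ := by
  obtain ⟨hb1, ⟨y, hyK, hyle⟩, _⟩ := hb
  obtain ⟨y', hy'R, hy'2, hy'd⟩ := perturb n hδ hδ' hyK
  have hy'K : y' ∈ Kset n := Rset_sub_Kset n hδ hy'R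
  have hlip := formR_lip d n hb1 hd (Kset_le_two n hy'K) (Kset_le_two n hyK)
  have h1 : formR d n (a + s • vdir d n) y' ≤ Lip d n * (6 * (n+1)^2 * δ) := by
    have h3 : (∑ i, |y' i - y i|) ≤ 6 * (n+1)^2 * δ := by
      calc (∑ i, |y' i - y i|) = ∑ i, |y i - y' i| :=
            Finset.sum_congr rfl fun i _ => abs_sub_comm _ _
        _ ≤ 6 * (n+1)^2 * δ := hy'd
    have h4 := abs_le.mp hlip
    have h5 : Lip d n * ∑ i, |y' i - y i| ≤ Lip d n * (6 * (n+1)^2 * δ) :=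
      mul_le_mul_of_nonneg_left h3 (le_of_lt (lip_pos d n hd))
    linarith
  have hg : cLow d n ≤ formR d n (vdir d n) y' := by
    rw [cLow, formR_vdir d n y' hd]
    exact gLow d n hy'K
  have hfa : formR d n a y' = formR d n (a + s • vdir d n) y' - s * formR d n (vdir d n) y' := by
    rw [formR_add_smul]; ring
  have hge := ha.2.2 y' hy'R
  have hsc : s * cLow d n ≤ Lip d n * (6 * (n+1)^2 * δ) := by
    have := mul_le_mul_of_nonneg_left hg hs.le
    nlinarith [hge, hfa, h1]
  have hc := cLow_pos d n
  have h6 : s ≤ Lip d n * (6 * (n+1)^2) * δ / cLow d n := by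
    rw [le_div_iff₀ hc]
    nlinarith
  have h7 : (Lip d n * (6 * (n+1)^2) / cLow d n + 1) * δ
      = Lip d n * (6 * (n+1)^2) * δ / cLow d n + δ := by
    field_simp
  have h8 : s < Lip d n * (6 * (n+1)^2) * δ / cLow d n + δ := by linarith
  rw [C2, h7]
  exact h8

lemma fiber_Tm {δ s : ℝ} (hδ : 0 < δ) (hδ' : δ ≤ ((8 : ℝ) * (n + 1))⁻¹) (hd : 0 < d)
    {a : Mono d n → ℝ} (ha : a ∈ Tm d n δ) (hb : a + s • vdir d n ∈ Tm d n δ) (hs : 0 < s) :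
    s < C2 d n * δ := by
  obtain ⟨ha1, ⟨y, hyK, hyge⟩, _⟩ := ha
  obtain ⟨y', hy'R, hy'2, hy'd⟩ := perturb n hδ hδ' hyK
  have hy'K : y' ∈ Kset n := Rset_sub_Kset n hδ hy'R
  have hlip := formR_lip d n ha1 hd (Kset_le_two n hy'K) (Kset_le_two n hyK)
  have h1 : -(Lip d n * (6 * (n+1)^2 * δ)) ≤ formR d n a y' := by
    have h3 : (∑ i, |y' i - y i|) ≤ 6 * (n+1)^2 * δ := by
      calc (∑ i, |y' i - y i|) = ∑ i, |y i - y' i| :=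
            Finset.sum_congr rfl fun i _ => abs_sub_comm _ _
        _ ≤ 6 * (n+1)^2 * δ := hy'd
    have h4 := abs_le.mp hlip
    have h5 : Lip d n * ∑ i, |y' i - y i| ≤ Lip d n * (6 * (n+1)^2 * δ) :=
      mul_le_mul_of_nonneg_left h3 (le_of_lt (lip_pos d n hd))
    linarith
  have hg : cLow d n ≤ formR d n (vdir d n) y' := by
    rw [cLow, formR_vdir d n y' hd]
    exact gLow d n hy'K
  have hfb : formR d n (a + s • vdir d n) y'
      = formR d n a y' + s * formR d n (vdir d n) y' := formR_add_smul d n a _ s y'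
  have hle := hb.2.2 y' hy'R
  have hsc : s * cLow d n ≤ Lip d n * (6 * (n+1)^2 * δ) := by
    have := mul_le_mul_of_nonneg_left hg hs.le
    nlinarith [hle, hfb, h1]
  have hc := cLow_pos d n
  have h6 : s ≤ Lip d n * (6 * (n+1)^2) * δ / cLow d n := by
    rw [le_div_iff₀ hc]
    nlinarith
  have h7 : (Lip d n * (6 * (n+1)^2) / cLow d n + 1) * δ
      = Lip d n * (6 * (n+1)^2) * δ / cLow d n + δ := by
    field_simp
  have h8 : s < Lip d n * (6 * (n+1)^2) * δ / cLow d n + δ := by linarith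
  rw [C2, h7]
  exact h8

lemma packing {T : Set (Mono d n → ℝ)} (hTm : MeasurableSet T)
    (hT1 : ∀ a ∈ T, ∀ m, |a m| ≤ 1) {v : Mono d n → ℝ} (hv : ∀ m, |v m| ≤ 1)
    {ρ : ℝ} (hρ : 0 < ρ)
    (hfib : ∀ a s, a ∈ T → a + s • v ∈ T → 0 < s → s < ρ) (Kn : ℕ) :
    (Kn : ENNReal) * volume T ≤
      ENNReal.ofReal ((2 * (1 + Kn * ρ)) ^ (Fintype.card (Mono d n))) := by
  classical
  set u : Mono d n → ℝ := ρ • v with hu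
  set A : ℕ → Set (Mono d n → ℝ) := fun k => (fun a => a - (k : ℝ) • u) ⁻¹' T with hA
  have hmeas : ∀ k, MeasurableSet (A k) := fun k =>
    hTm.preimage (measurable_id.sub_const _)
  have hvol : ∀ k, volume (A k) = volume T := by
    intro k
    show volume ((fun a : Mono d n → ℝ => a - (k:ℝ) • u) ⁻¹' T) = volume T
    simp only [sub_eq_add_neg]
    exact measure_preimage_add_right volume _ T
  have hdisj : ∀ j k, j < k → Disjoint (A j) (A k) := by
    intro j k hjk
    rw [Set.disjoint_left]
    intro a haj hak
    have h1 : a - (j:ℝ) • u ∈ T := haj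
    have h2 : a - (k:ℝ) • u ∈ T := hak
    have key : (a - (k:ℝ) • u) + (((k:ℝ) - j) * ρ) • v = a - (j:ℝ) • u := by
      rw [hu]
      funext m
      simp only [Pi.add_apply, Pi.sub_apply, Pi.smul_apply, smul_eq_mul]
      ring
    have hs : (0:ℝ) < ((k:ℝ) - j) * ρ := by
      have : (j:ℝ) < k := by exact_mod_cast hjk
      nlinarith
    have := hfib _ _ h2 (key ▸ h1) hs
    have hk1 : (1:ℝ) ≤ (k:ℝ) - j := by
      have h5 : (j:ℕ) + 1 ≤ k := hjk
      have h6 := (Nat.cast_le (α := ℝ)).mpr h5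
      push_cast at h6
      linarith
    nlinarith
  have hsub : ∀ k, k < Kn → A k ⊆ Set.univ.pi fun _ : Mono d n =>
      Set.Icc (-(1 + Kn * ρ)) (1 + Kn * ρ) := by
    intro k hk a ha
    intro m _
    have h1 := hT1 _ ha m
    rw [hu] at h1
    simp only [Pi.sub_apply, Pi.smul_apply, smul_eq_mul] at h1
    have h2 : |(k:ℝ) * (ρ * v m)| ≤ Kn * ρ := by
      rw [abs_mul, abs_mul]
      have hk' : |(k:ℝ)| ≤ (Kn:ℝ) := by
        rw [abs_of_nonneg (Nat.cast_nonneg k)]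
        exact_mod_cast le_of_lt hk
      have h5 : |ρ| * |v m| ≤ ρ := by
        rw [abs_of_pos hρ]
        calc ρ * |v m| ≤ ρ * 1 := mul_le_mul_of_nonneg_left (hv m) hρ.le
          _ = ρ := mul_one ρ
      exact mul_le_mul hk' h5 (by positivity) (Nat.cast_nonneg Kn)
    have h3 := abs_le.mp h1
    have h4 := abs_le.mp h2
    simp only [Set.mem_Icc]
    constructor
    · linarith [h3.1, h4.1]
    · linarith [h3.2, h4.2]
  have hunion : (⋃ k ∈ Finset.range Kn, A k) ⊆ Set.univ.pi fun _ : Mono d n =>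
      Set.Icc (-(1 + Kn * ρ)) (1 + Kn * ρ) := by
    intro a ha
    simp only [Set.mem_iUnion] at ha
    obtain ⟨k, hk, hak⟩ := ha
    exact hsub k (Finset.mem_range.mp hk) hak
  have hsum : ∑ k ∈ Finset.range Kn, volume (A k)
      = volume (⋃ k ∈ Finset.range Kn, A k) := by
    rw [measure_biUnion_finset ?_ fun k _ => hmeas k]
    intro j hj k hk hjk
    rcases lt_or_gt_of_ne hjk with h | h
    · exact hdisj j k h
    · exact (hdisj k j h).symm
  have hvolbox : volume (Set.univ.pi fun _ : Mono d n =>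
      Set.Icc (-(1 + Kn * ρ)) (1 + Kn * ρ))
      = ENNReal.ofReal ((2 * (1 + Kn * ρ)) ^ (Fintype.card (Mono d n))) := by
    have hb : (0:ℝ) ≤ 2 * (1 + Kn * ρ) := by
      nlinarith [mul_nonneg (Nat.cast_nonneg (α := ℝ) Kn) hρ.le]
    rw [volume_pi_pi]
    rw [Real.volume_Icc]
    rw [Finset.prod_const, Finset.card_univ]
    rw [ENNReal.ofReal_pow hb]
    congr 1
    ring_nf
  calc (Kn : ENNReal) * volume T = ∑ _k ∈ Finset.range Kn, volume T := by
        rw [Finset.sum_const, Finset.card_range, nsmul_eq_mul]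
    _ = ∑ k ∈ Finset.range Kn, volume (A k) := by
        exact (Finset.sum_congr rfl fun k _ => (hvol k).symm)
    _ = volume (⋃ k ∈ Finset.range Kn, A k) := hsum
    _ ≤ _ := by
        rw [← hvolbox]
        exact measure_mono hunion

end BSV


/-- Let `d ≥ 2`, `n ≥ 3`, `δ ≥ 0`. The set of coefficient vectors `a` in the closed unit
ball of `ℝ^{N_{d,n}}` such that `f_a` has a zero on `S^n` with all coordinates `≥ 0` but
no zero on `S^n` with all coordinates `> δ` has Lebesgue measure `≪ δ`, with implied
constant depending only on `d` and `n`. In particular for `δ = 0` it has measure zero. -/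
theorem boundary_set_volume (d n : ℕ) (hd : 2 ≤ d) (hn : 3 ≤ n) :
    ∃ C : ℝ, 0 < C ∧ ∀ δ : ℝ, 0 ≤ δ →
      MeasureTheory.volume {a : Mono d n → ℝ |
          (∑ m, (a m) ^ 2) ≤ 1 ∧
          (∃ x : Fin (n + 1) → ℝ, (∑ i, x i ^ 2) = 1 ∧ (∀ i, 0 ≤ x i) ∧
            formR d n a x = 0) ∧
          ¬ (∃ x : Fin (n + 1) → ℝ, (∑ i, x i ^ 2) = 1 ∧ (∀ i, δ < x i) ∧
            formR d n a x = 0)}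
        ≤ ENNReal.ofReal (C * δ) := by
  classical
  have hd0 : 0 < d := by omega
  set N := Fintype.card (Mono d n) with hN
  set Bset : ℝ → Set (Mono d n → ℝ) := fun δ => {a : Mono d n → ℝ |
      (∑ m, (a m) ^ 2) ≤ 1 ∧
      (∃ x : Fin (n + 1) → ℝ, (∑ i, x i ^ 2) = 1 ∧ (∀ i, 0 ≤ x i) ∧
        formR d n a x = 0) ∧
      ¬ (∃ x : Fin (n + 1) → ℝ, (∑ i, x i ^ 2) = 1 ∧ (∀ i, δ < x i) ∧
        formR d n a x = 0)} with hBset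
  have hC2 := BSV.C2_pos d n hd0
  set C : ℝ := 2 * (2 + 4 * BSV.C2 d n) ^ N + 2 ^ N * (8 * (n + 1)) + 1 with hC
  have hCpos : 0 < C := by
    have h1 : (0:ℝ) < 2 + 4 * BSV.C2 d n := by linarith
    have h2 : (0:ℝ) < (2 + 4 * BSV.C2 d n) ^ N := pow_pos h1 N
    have h3 : (0:ℝ) < (2:ℝ) ^ N := pow_pos two_pos N
    have h4 : (0:ℝ) < (n:ℝ) + 1 := by positivity
    rw [hC]
    nlinarith
  refine ⟨C, hCpos, ?_⟩
  -- the main bound for positive δ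
  have key : ∀ δ : ℝ, 0 < δ → volume (Bset δ) ≤ ENNReal.ofReal (C * δ) := by
    intro δ hδ
    by_cases hsmall : δ ≤ ((8 : ℝ) * (n + 1))⁻¹
    · -- small δ
      have hδ1 : δ ≤ 1 := by
        refine le_trans hsmall ?_
        rw [inv_le_one_iff₀]; right
        have : (0:ℝ) ≤ (n:ℝ) := Nat.cast_nonneg n
        nlinarith
      -- B ⊆ Tp ∪ Tm
      have hBsub : Bset δ ⊆ BSV.Tp d n δ ∪ BSV.Tm d n δ := by
        intro a ha
        obtain ⟨h1, ⟨x0, hx0q, hx0p, hx0z⟩, h3⟩ := ha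
        by_cases hp : ∀ x ∈ BSV.Rset n δ, 0 ≤ formR d n a x
        · exact Or.inl ⟨h1, ⟨x0, ⟨hx0q, hx0p⟩, le_of_eq hx0z⟩, hp⟩
        · refine Or.inr ⟨h1, ⟨x0, ⟨hx0q, hx0p⟩, ge_of_eq hx0z⟩, ?_⟩
          push_neg at hp
          obtain ⟨p, hpR, hplt⟩ := hp
          intro q hqR
          by_contra hq
          push_neg at hq
          obtain ⟨z, hzR, hz⟩ := (BSV.Rset_preconnected n hδ).intermediate_value₂
            hpR hqR (BSV.continuous_formR_x d n a).continuousOn continuousOn_const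
            hplt.le hq.le
          exact h3 ⟨z, hzR.1, hzR.2, hz⟩
      have habs1 : ∀ (T : Set (Mono d n → ℝ)),
          (∀ a ∈ T, (∑ m, a m ^ 2) ≤ 1) → ∀ a ∈ T, ∀ m, |a m| ≤ 1 := by
        intro T hT a ha m
        rw [← sq_le_one_iff_abs_le_one]
        exact le_trans (Finset.single_le_sum (fun i _ => sq_nonneg (a i))
          (Finset.mem_univ m)) (hT a ha)
      set Kn : ℕ := ⌈δ⁻¹⌉₊ with hKn
      have hKpos : 0 < Kn := Nat.ceil_pos.mpr (by positivity)
      have hKn0 : (Kn : ENNReal) ≠ 0 := by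
        simpa using Nat.pos_iff_ne_zero.mp hKpos
      have hKnt : (Kn : ENNReal) ≠ ⊤ := ENNReal.natCast_ne_top Kn
      have hρ : 0 < BSV.C2 d n * δ := mul_pos hC2 hδ
      -- bound the box size
      have hbox : (2 * (1 + Kn * (BSV.C2 d n * δ))) ^ N ≤ (2 + 4 * BSV.C2 d n) ^ N := by
        apply pow_le_pow_left₀
        · nlinarith [mul_nonneg (Nat.cast_nonneg (α := ℝ) Kn) hρ.le]
        · have hceil : (Kn:ℝ) < δ⁻¹ + 1 := Nat.ceil_lt_add_one (by positivity)
          have hKnρ : (Kn:ℝ) * (BSV.C2 d n * δ) ≤ (δ⁻¹ + 1) * (BSV.C2 d n * δ) := by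
            apply mul_le_mul_of_nonneg_right hceil.le hρ.le
          have hinv : (δ⁻¹ + 1) * (BSV.C2 d n * δ) = BSV.C2 d n * (1 + δ) := by
            field_simp
          nlinarith [hKnρ, hinv, mul_le_mul_of_nonneg_left hδ1 hC2.le]
      have hVK : ∀ (T : Set (Mono d n → ℝ)), MeasurableSet T →
          (∀ a ∈ T, ∀ m, |a m| ≤ 1) →
          (∀ a s, a ∈ T → a + s • BSV.vdir d n ∈ T → 0 < s → s < BSV.C2 d n * δ) →
          volume T ≤ ENNReal.ofReal ((2 + 4 * BSV.C2 d n) ^ N) * ENNReal.ofReal δ := by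
        intro T hTmeas hT1 hfib
        have hpack := BSV.packing d n hTmeas hT1 (BSV.vdir_le_one d n) hρ hfib Kn
        have hpack2 : (Kn : ENNReal) * volume T
            ≤ ENNReal.ofReal ((2 + 4 * BSV.C2 d n) ^ N) := by
          refine le_trans hpack (ENNReal.ofReal_le_ofReal ?_)
          exact hbox
        have hinv2 : (Kn : ENNReal)⁻¹ ≤ ENNReal.ofReal δ := by
          have h1 : δ⁻¹ ≤ (Kn:ℝ) := Nat.le_ceil _
          have h2 : ((Kn:ℝ))⁻¹ ≤ δ := by
            rw [← inv_inv δ]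
            exact inv_anti₀ (by positivity) h1
          calc (Kn : ENNReal)⁻¹ = (ENNReal.ofReal (Kn:ℝ))⁻¹ := by
                rw [ENNReal.ofReal_natCast]
            _ = ENNReal.ofReal ((Kn:ℝ))⁻¹ := by
                rw [ENNReal.ofReal_inv_of_pos (by exact_mod_cast hKpos)]
            _ ≤ ENNReal.ofReal δ := ENNReal.ofReal_le_ofReal h2
        calc volume T = (Kn : ENNReal)⁻¹ * ((Kn : ENNReal) * volume T) := by
              rw [← mul_assoc, ENNReal.inv_mul_cancel hKn0 hKnt, one_mul]
          _ ≤ (Kn : ENNReal)⁻¹ * ENNReal.ofReal ((2 + 4 * BSV.C2 d n) ^ N) :=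
              mul_le_mul_right hpack2 _
          _ ≤ ENNReal.ofReal δ * ENNReal.ofReal ((2 + 4 * BSV.C2 d n) ^ N) :=
              mul_le_mul_left hinv2 _
          _ = ENNReal.ofReal ((2 + 4 * BSV.C2 d n) ^ N) * ENNReal.ofReal δ := mul_comm _ _
      have hTpbound := hVK (BSV.Tp d n δ) (BSV.Tp_closed d n δ).measurableSet
        (habs1 _ fun a ha => ha.1) (fun a s ha hb hs => BSV.fiber_Tp d n hδ hsmall hd0 ha hb hs)
      have hTmbound := hVK (BSV.Tm d n δ) (BSV.Tm_closed d n δ).measurableSet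
        (habs1 _ fun a ha => ha.1) (fun a s ha hb hs => BSV.fiber_Tm d n hδ hsmall hd0 ha hb hs)
      calc volume (Bset δ) ≤ volume (BSV.Tp d n δ ∪ BSV.Tm d n δ) := measure_mono hBsub
        _ ≤ volume (BSV.Tp d n δ) + volume (BSV.Tm d n δ) := measure_union_le _ _
        _ ≤ ENNReal.ofReal ((2 + 4 * BSV.C2 d n) ^ N) * ENNReal.ofReal δ
            + ENNReal.ofReal ((2 + 4 * BSV.C2 d n) ^ N) * ENNReal.ofReal δ :=
            add_le_add hTpbound hTmbound
        _ = ENNReal.ofReal ((2 + 4 * BSV.C2 d n) ^ N * δ)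
            + ENNReal.ofReal ((2 + 4 * BSV.C2 d n) ^ N * δ) := by
            rw [ENNReal.ofReal_mul (by positivity)]
        _ = ENNReal.ofReal ((2 + 4 * BSV.C2 d n) ^ N * δ + (2 + 4 * BSV.C2 d n) ^ N * δ) := by
            rw [ENNReal.ofReal_add (by positivity) (by positivity)]
        _ ≤ ENNReal.ofReal (C * δ) := by
            apply ENNReal.ofReal_le_ofReal
            rw [hC]
            have h3 : (0:ℝ) < (2:ℝ) ^ N := pow_pos two_pos N
            have h4 : (0:ℝ) < (n:ℝ) + 1 := by positivity
            nlinarith [mul_nonneg (mul_nonneg h3.le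
              (by positivity : (0:ℝ) ≤ 8 * ((n:ℝ) + 1))) hδ.le, hδ.le]
    · -- large δ
      push_neg at hsmall
      have hBbox : Bset δ ⊆ Set.univ.pi fun _ : Mono d n => Set.Icc (-1 : ℝ) 1 := by
        intro a ha m _
        have h1 : |a m| ≤ 1 := by
          rw [← sq_le_one_iff_abs_le_one]
          exact le_trans (Finset.single_le_sum (fun i _ => sq_nonneg (a i))
            (Finset.mem_univ m)) ha.1
        have := abs_le.mp h1
        exact ⟨this.1, this.2⟩
      have hvolbox : volume (Set.univ.pi fun _ : Mono d n => Set.Icc (-1 : ℝ) 1)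
          = ENNReal.ofReal ((2:ℝ) ^ N) := by
        rw [volume_pi_pi]
        rw [Real.volume_Icc]
        rw [Finset.prod_const, Finset.card_univ, ← hN]
        rw [ENNReal.ofReal_pow (by norm_num)]
        norm_num
      calc volume (Bset δ) ≤ ENNReal.ofReal ((2:ℝ) ^ N) := by
            rw [← hvolbox]; exact measure_mono hBbox
        _ ≤ ENNReal.ofReal (C * δ) := by
            apply ENNReal.ofReal_le_ofReal
            have h8 : (0:ℝ) < 8 * ((n:ℝ) + 1) := by positivity
            have hδ8 : ((8:ℝ) * (n + 1))⁻¹ < δ := hsmall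
            have h9 : (1:ℝ) ≤ (8 * ((n:ℝ)+1)) * δ := by
              have := mul_lt_mul_of_pos_left hδ8 h8
              rw [mul_inv_cancel₀ (ne_of_gt h8)] at this
              linarith
            have h2 : (0:ℝ) < (2:ℝ) ^ N := pow_pos two_pos N
            have h1 : (0:ℝ) < 2 + 4 * BSV.C2 d n := by linarith
            have h5 : (0:ℝ) < (2 + 4 * BSV.C2 d n) ^ N := pow_pos h1 N
            rw [hC]
            nlinarith [mul_pos h5 hδ, hδ]
  intro δ hδ0
  rcases eq_or_lt_of_le hδ0 with hz | hpos
  · -- δ = 0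
    rw [← hz]
    have hzero : volume (Bset 0) = 0 := by
      have hmono : ∀ δ' : ℝ, 0 ≤ δ' → Bset 0 ⊆ Bset δ' := by
        intro δ' hδ' a ha
        refine ⟨ha.1, ha.2.1, ?_⟩
        intro hcon
        obtain ⟨x, hxq, hxgt, hxz⟩ := hcon
        exact ha.2.2 ⟨x, hxq, fun i => lt_of_le_of_lt hδ' (hxgt i), hxz⟩
      have hle0 : volume (Bset 0) ≤ 0 := by
        apply ENNReal.le_of_forall_pos_le_add
        intro ε hε _
        rw [zero_add]
        set δ' : ℝ := (ε : ℝ) / C with hδ'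
        have hδ'pos : 0 < δ' := by
          rw [hδ']
          positivity
        calc volume (Bset 0) ≤ volume (Bset δ') := measure_mono (hmono δ' hδ'pos.le)
          _ ≤ ENNReal.ofReal (C * δ') := key δ' hδ'pos
          _ = ENNReal.ofReal (ε : ℝ) := by
              rw [hδ', mul_div_cancel₀ _ (ne_of_gt hCpos)]
          _ = (ε : ENNReal) := ENNReal.ofReal_coe_nnreal
      exact le_antisymm hle0 zero_le
    rw [show Bset 0 = {a : Mono d n → ℝ |
      (∑ m, (a m) ^ 2) ≤ 1 ∧
      (∃ x : Fin (n + 1) → ℝ, (∑ i, x i ^ 2) = 1 ∧ (∀ i, 0 ≤ x i) ∧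
        formR d n a x = 0) ∧
      ¬ (∃ x : Fin (n + 1) → ℝ, (∑ i, x i ^ 2) = 1 ∧ (∀ i, (0:ℝ) < x i) ∧
        formR d n a x = 0)} from rfl] at hzero
    rw [hzero]
    exact zero_le
  · exact key δ hpos
end
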